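/- arXiv:1808.04329 — 6 statements merged into one kernel-verified Lean document; each statement's English description precedes it below -/
import Mathlib

section
/- Let T be an ℕ-valued random variable with E T < ∞ and P(T ≥ j) > 0 for all j ∈ ℕ. Define transition probabilities on ℕ by p_{j,0} = P(T = j)/P(T ≥ j), p_{j,j+1} = P(T ≥ j+1)/P(T ≥ j), and p_{j,k} = 0 otherwise, with stationary distribution π(j) = P(T ≥ j)/(1 + E T), and transition operator Pf(j) = (P(T = j)/P(T ≥ j))·f(0) + (P(T ≥ j+1)/P(T ≥ j))·f(j+1). If 3·E T < P(T = 0) and P(T ≥ 1) ≥ sup_{k ≥ 1} P(T ≥ k+1)/P(T ≥ k), then for every f ∈ L²(π) with Σ_j f(j) π(j) = 0 and Σ_j f(j)² π(j) ≤ 1, one has Σ_j |Pf(j)|² π(j) ≤ 3·E T + P(T ≥ 1) = 1 − (P(T = 0) − 3·E T) < 1; in particular the Markov chain has the L²-spectral gap property. -/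
open MeasureTheory Filter

noncomputable section

private lemma aux_sum_ite (m : ℕ) : ∀ n : ℕ,
    (∑ k ∈ Finset.range n, (if k + 1 ≤ m then (1:ℝ) else 0)) = (min n m : ℕ) := by
  intro n
  induction n with
  | zero => simp
  | succ n ih =>
    rw [Finset.sum_range_succ, ih]
    by_cases h : n + 1 ≤ m
    · rw [if_pos h]
      have hmin : min (n+1) m = min n m + 1 := by omega
      rw [hmin]; push_cast; ring
    · rw [if_neg h]
      have hmin : min (n+1) m = min n m := by omega
      rw [hmin, add_zero]

/-- Cauchy–Schwarz for tsums of nonnegative sequences with weights. -/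
private lemma aux_cs {a w : ℕ → ℝ} (ha : ∀ k, 0 ≤ a k) (hw : ∀ k, 0 ≤ w k)
    (h1 : Summable (fun k => a k ^ 2 * w k)) (h2 : Summable w)
    (h3 : Summable fun k => a k * w k) :
    (∑' k, a k * w k) ^ 2 ≤ (∑' k, a k ^ 2 * w k) * ∑' k, w k := by
  set C := (∑' k, a k ^ 2 * w k) * ∑' k, w k with hC
  have hC0 : 0 ≤ C :=
    mul_nonneg (tsum_nonneg fun k => mul_nonneg (sq_nonneg _) (hw k)) (tsum_nonneg hw)
  have hle : (∑' k, a k * w k) ≤ Real.sqrt C := by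
    refine Summable.tsum_le_of_sum_le h3 fun s => ?_
    have h4 : (∑ k ∈ s, a k * w k) ^ 2 ≤ C := by
      calc (∑ k ∈ s, a k * w k) ^ 2
          = (∑ k ∈ s, (a k * Real.sqrt (w k)) * Real.sqrt (w k)) ^ 2 := by
            congr 1
            refine Finset.sum_congr rfl fun k _ => ?_
            rw [mul_assoc, Real.mul_self_sqrt (hw k)]
        _ ≤ (∑ k ∈ s, (a k * Real.sqrt (w k)) ^ 2) * ∑ k ∈ s, (Real.sqrt (w k)) ^ 2 :=
            Finset.sum_mul_sq_le_sq_mul_sq s _ _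
        _ = (∑ k ∈ s, a k ^ 2 * w k) * ∑ k ∈ s, w k := by
            congr 1 <;> refine Finset.sum_congr rfl fun k _ => ?_
            · rw [mul_pow, Real.sq_sqrt (hw k)]
            · exact Real.sq_sqrt (hw k)
        _ ≤ C := by
            refine mul_le_mul (Summable.sum_le_tsum s (fun k _ => mul_nonneg (sq_nonneg _) (hw k)) h1)
              (Summable.sum_le_tsum s (fun k _ => hw k) h2)
              (Finset.sum_nonneg fun k _ => hw k)
              (tsum_nonneg fun k => mul_nonneg (sq_nonneg _) (hw k))
    calc (∑ k ∈ s, a k * w k) ≤ |∑ k ∈ s, a k * w k| := le_abs_self _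
      _ = Real.sqrt ((∑ k ∈ s, a k * w k) ^ 2) := (Real.sqrt_sq_eq_abs _).symm
      _ ≤ Real.sqrt C := Real.sqrt_le_sqrt h4
  have h5 : (∑' k, a k * w k) ^ 2 ≤ (Real.sqrt C) ^ 2 :=
    pow_le_pow_left₀ (tsum_nonneg fun k => mul_nonneg (ha k) (hw k)) hle 2
  rwa [Real.sq_sqrt hC0] at h5

set_option maxHeartbeats 1000000 in
/-- **Lemma (spectral gap for the backward-recurrence-type chain).** Let `T` be an
`ℕ`-valued random variable with `E T < ∞` and `P(T ≥ j) > 0` for all `j`, and consider the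
Markov chain on `ℕ` with `p_{j,0} = P(T=j)/P(T≥j)`, `p_{j,j+1} = P(T≥j+1)/P(T≥j)`,
stationary distribution `π(j) = P(T≥j)/(1+ET)` and transition operator
`Pf(j) = (P(T=j)/P(T≥j)) f(0) + (P(T≥j+1)/P(T≥j)) f(j+1)`. If `3 ET < P(T=0)` and
`P(T≥1) ≥ sup_{k≥1} P(T≥k+1)/P(T≥k)`, then for every `f ∈ L²(π)` with `Σ f(j) π(j) = 0`
and `Σ f(j)² π(j) ≤ 1`, one has
`Σ |Pf(j)|² π(j) ≤ 3 ET + P(T≥1) = 1 − (P(T=0) − 3 ET) < 1`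
(so the chain has the `L²`-spectral gap property). -/
theorem stmt13
    {Ω : Type*} [MeasurableSpace Ω] (μ : Measure Ω) [IsProbabilityMeasure μ]
    (T : Ω → ℕ) (hT : Measurable T)
    (hTint : Integrable (fun ω => (T ω : ℝ)) μ)
    (G : ℕ → ℝ) (hG : ∀ j, G j = (μ {ω | j ≤ T ω}).toReal)
    (hGpos : ∀ j, 0 < G j)
    (Pm : ℕ → ℝ) (hPm : ∀ j, Pm j = (μ {ω | T ω = j}).toReal)
    (ET : ℝ) (hET : ET = ∫ ω, (T ω : ℝ) ∂μ)
    (πd : ℕ → ℝ) (hπd : ∀ j, πd j = G j / (1 + ET))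
    (Pf : (ℕ → ℝ) → ℕ → ℝ)
    (hPf : ∀ f j, Pf f j = (Pm j / G j) * f 0 + (G (j + 1) / G j) * f (j + 1))
    (hcond1 : 3 * ET < Pm 0)
    (hcond2 : ∀ k : ℕ, 1 ≤ k → G (k + 1) / G k ≤ G 1) :
    (∀ f : ℕ → ℝ, Summable (fun j => f j ^ 2 * πd j) →
      (∑' j, f j * πd j) = 0 → (∑' j, f j ^ 2 * πd j) ≤ 1 →
      (∑' j, (Pf f j) ^ 2 * πd j) ≤ 3 * ET + G 1)
    ∧ 3 * ET + G 1 = 1 - (Pm 0 - 3 * ET) ∧ 3 * ET + G 1 < 1 := by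
  -- basic measure facts
  have hG0 : G 0 = 1 := by
    rw [hG]
    have huniv : {ω | 0 ≤ T ω} = Set.univ := by ext ω; simp
    rw [huniv, measure_univ, ENNReal.toReal_one]
  have hmeasIci : ∀ k : ℕ, MeasurableSet {ω | k ≤ T ω} := fun k =>
    hT measurableSet_Ici
  have hPmG : ∀ j, Pm j = G j - G (j + 1) := by
    intro j
    have hs : MeasurableSet {ω | j + 1 ≤ T ω} := hmeasIci (j + 1)
    have hunion : {ω | T ω = j} ∪ {ω | j + 1 ≤ T ω} = {ω | j ≤ T ω} := by
      ext ω; simp only [Set.mem_union, Set.mem_setOf_eq]; omega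
    have hdisj : Disjoint {ω | T ω = j} {ω | j + 1 ≤ T ω} := by
      rw [Set.disjoint_left]
      intro ω h1 h2
      simp only [Set.mem_setOf_eq] at h1 h2
      omega
    have hm : μ {ω | j ≤ T ω} = μ {ω | T ω = j} + μ {ω | j + 1 ≤ T ω} := by
      rw [← hunion, measure_union hdisj hs]
    rw [hPm, hG, hG, hm, ENNReal.toReal_add (measure_ne_top μ _) (measure_ne_top μ _)]
    ring
  have hPm_nonneg : ∀ j, 0 ≤ Pm j := fun j => by rw [hPm]; exact ENNReal.toReal_nonneg
  have hETnn : 0 ≤ ET := by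
    rw [hET]; exact integral_nonneg fun ω => by positivity
  have h1ET : 0 < 1 + ET := by linarith
  -- layer-cake bound
  have layer : ∀ n, ∑ k ∈ Finset.range n, G (k + 1) ≤ ET := by
    intro n
    have hint : ∀ k : ℕ, Integrable (Set.indicator {ω | k + 1 ≤ T ω} (fun _ => (1:ℝ))) μ :=
      fun k => (integrable_const 1).indicator (hmeasIci (k + 1))
    have heq : ∀ k : ℕ, G (k + 1)
        = ∫ ω, Set.indicator {ω | k + 1 ≤ T ω} (fun _ => (1:ℝ)) ω ∂μ := by
      intro k
      rw [hG]
      exact (integral_indicator_one (hmeasIci (k + 1))).symm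
    calc ∑ k ∈ Finset.range n, G (k + 1)
        = ∫ ω, (∑ k ∈ Finset.range n,
            Set.indicator {ω' | k + 1 ≤ T ω'} (fun _ => (1:ℝ)) ω) ∂μ := by
          rw [integral_finset_sum _ (fun k _ => hint k)]
          exact Finset.sum_congr rfl fun k _ => heq k
      _ ≤ ∫ ω, (T ω : ℝ) ∂μ := by
          refine integral_mono (integrable_finset_sum _ fun k _ => hint k) hTint fun ω => ?_
          have hind : ∀ k : ℕ, Set.indicator {ω' | k + 1 ≤ T ω'} (fun _ => (1:ℝ)) ω
              = if k + 1 ≤ T ω then 1 else 0 := by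
            intro k; simp [Set.indicator_apply, Set.mem_setOf_eq]
          simp only [hind]
          rw [aux_sum_ite (T ω) n]
          exact_mod_cast Nat.cast_le.mpr (min_le_right n (T ω))
      _ = ET := hET.symm
  have hG1nn : ∀ k : ℕ, (0:ℝ) ≤ G (k + 1) := fun k => (hGpos _).le
  have hsumG1 : Summable (fun k => G (k + 1)) := summable_of_sum_range_le hG1nn layer
  have htsumG1 : ∑' k, G (k + 1) ≤ ET := Real.tsum_le_of_sum_range_le hG1nn layer
  have hsumG : Summable G := (summable_nat_add_iff 1).1 hsumG1
  have hsumPm : Summable Pm := by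
    have hfe : Pm = fun j => G j - G (j + 1) := funext hPmG
    rw [hfe]; exact hsumG.sub hsumG1
  have htsumPm : ∑' j, Pm j = 1 := by
    calc ∑' j, Pm j = ∑' j, (G j - G (j + 1)) := tsum_congr hPmG
      _ = (∑' j, G j) - ∑' j, G (j + 1) := Summable.tsum_sub hsumG hsumG1
      _ = 1 := by rw [Summable.tsum_eq_zero_add hsumG, hG0]; ring
  -- πd facts
  have hπpos : ∀ j, 0 < πd j := fun j => by
    rw [hπd]; exact div_pos (hGpos j) h1ET
  have hsumπ : Summable πd := by
    have hfe : πd = fun j => G j / (1 + ET) := funext hπd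
    rw [hfe]; exact hsumG.div_const _
  have hsumπ1 : Summable fun k => πd (k + 1) := (summable_nat_add_iff 1).2 hsumπ
  have hπ0 : πd 0 = 1 / (1 + ET) := by rw [hπd, hG0]
  have hSle : ∑' k, πd (k + 1) ≤ ET * πd 0 := by
    have h1 : ∑' k, πd (k + 1) = (∑' k, G (k + 1)) / (1 + ET) := by
      simp_rw [hπd]; exact tsum_div_const
    rw [h1, hπ0]
    rw [div_le_iff₀ h1ET]
    have : ET * (1 / (1 + ET)) * (1 + ET) = ET := by field_simp
    rw [this]; exact htsumG1
  have hπ00 : 0 < πd 0 := hπpos 0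
  have hPm0 : Pm 0 = 1 - G 1 := by
    have h := hPmG 0
    rw [hG0] at h
    linarith
  have hG1pos : 0 < G 1 := hGpos 1
  refine ⟨?_, by rw [hPm0]; ring, by linarith [hPm0 ▸ hcond1]⟩
  -- main part
  intro f hs2 hmean hnorm
  have habs_le : ∀ j, |f j| * πd j ≤ (1/2) * (f j ^ 2 * πd j + πd j) := by
    intro j
    have h2f : 2 * |f j| ≤ f j ^ 2 + 1 := by nlinarith [sq_nonneg (|f j| - 1), sq_abs (f j)]
    nlinarith [mul_le_mul_of_nonneg_right h2f (hπpos j).le]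
  have hsumfabs : Summable (fun j => |f j| * πd j) := by
    refine Summable.of_nonneg_of_le
      (fun j => mul_nonneg (abs_nonneg _) (hπpos j).le) habs_le ?_
    exact (hs2.add hsumπ).mul_left _
  have hsumf : Summable (fun j => f j * πd j) := by
    refine Summable.of_norm ?_
    have hfe : (fun j => ‖f j * πd j‖) = fun j => |f j| * πd j := by
      funext j
      rw [Real.norm_eq_abs, abs_mul, abs_of_nonneg (hπpos j).le]
    rw [hfe]; exact hsumfabs
  have hsumfabs1 : Summable (fun k => |f (k + 1)| * πd (k + 1)) :=
    (summable_nat_add_iff 1).2 hsumfabs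
  have hs21 : Summable (fun k => f (k + 1) ^ 2 * πd (k + 1)) :=
    (summable_nat_add_iff 1).2 hs2
  set A := ∑' k, |f (k + 1)| * πd (k + 1) with hA
  set B := ∑' k, f (k + 1) ^ 2 * πd (k + 1) with hB
  set S := ∑' k, πd (k + 1) with hS
  have hA0 : 0 ≤ A := tsum_nonneg fun k => mul_nonneg (abs_nonneg _) (hπpos _).le
  have hS0 : 0 ≤ S := tsum_nonneg fun k => (hπpos _).le
  have hB0 : 0 ≤ B := tsum_nonneg fun k => mul_nonneg (sq_nonneg _) (hπpos _).le
  have hmean' : f 0 * πd 0 = -∑' k, f (k + 1) * πd (k + 1) := by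
    have h := Summable.tsum_eq_zero_add hsumf
    rw [hmean] at h
    linarith
  have hf0A : |f 0| * πd 0 ≤ A := by
    have h1 : |f 0 * πd 0| = |f 0| * πd 0 := by
      rw [abs_mul, abs_of_nonneg (hπpos 0).le]
    rw [← h1, hmean', abs_neg]
    have hsn : Summable (fun k => ‖f (k + 1) * πd (k + 1)‖) := by
      simp only [Real.norm_eq_abs, abs_mul]
      refine hsumfabs1.congr fun k => ?_
      rw [abs_of_nonneg (hπpos _).le]
    calc |∑' k, f (k + 1) * πd (k + 1)|
        = ‖∑' k, f (k + 1) * πd (k + 1)‖ := (Real.norm_eq_abs _).symm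
      _ ≤ ∑' k, ‖f (k + 1) * πd (k + 1)‖ := norm_tsum_le_tsum_norm hsn
      _ = A := tsum_congr fun k => by
          rw [Real.norm_eq_abs, abs_mul, abs_of_nonneg (hπpos _).le]
  have hB1 : B ≤ 1 := by
    have h := Summable.tsum_eq_zero_add hs2
    rw [h] at hnorm
    have := mul_nonneg (sq_nonneg (f 0)) (hπpos 0).le
    linarith
  have hCS : A ^ 2 ≤ B * S := by
    have h := aux_cs (a := fun k => |f (k + 1)|) (w := fun k => πd (k + 1))
      (fun k => abs_nonneg _) (fun k => (hπpos _).le) ?_ hsumπ1 hsumfabs1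
    · have heq : ∑' k, |f (k + 1)| ^ 2 * πd (k + 1) = B :=
        tsum_congr fun k => by rw [sq_abs]
      rwa [heq] at h
    · have hfe : (fun k => |f (k + 1)| ^ 2 * πd (k + 1))
          = fun k => f (k + 1) ^ 2 * πd (k + 1) := by
        funext k; rw [sq_abs]
      rw [hfe]; exact hs21
  have hA2 : A ^ 2 ≤ S := hCS.trans (mul_le_of_le_one_left hS0 hB1)
  -- pointwise bound
  have hpt : ∀ j, (Pf f j) ^ 2 * πd j ≤
      f 0 ^ 2 * (Pm j / (1 + ET)) + 2 * |f 0| * (|f (j + 1)| * πd (j + 1))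
        + G 1 * (f (j + 1) ^ 2 * πd (j + 1)) := by
    intro j
    have hg := hGpos j
    have hg' := hGpos (j + 1)
    have hpm0 := hPm_nonneg j
    have hpmle : Pm j ≤ G j := by rw [hPmG j]; linarith [hg'.le]
    have hb1 : G (j + 1) ≤ G 1 * G j := by
      rcases Nat.eq_zero_or_pos j with h0 | h1
      · subst h0; rw [hG0, mul_one]
      · have h := hcond2 j h1
        rwa [div_le_iff₀ hg] at h
    have hxy : f 0 * f (j + 1) ≤ |f 0| * |f (j + 1)| := by
      rw [← abs_mul]; exact le_abs_self _
    have p1 : Pm j * (Pm j * f 0 ^ 2) ≤ G j * (Pm j * f 0 ^ 2) :=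
      mul_le_mul_of_nonneg_right hpmle (mul_nonneg hpm0 (sq_nonneg _))
    have p2 : Pm j * (f 0 * f (j + 1)) ≤ G j * (|f 0| * |f (j + 1)|) :=
      le_trans (mul_le_mul_of_nonneg_left hxy hpm0)
        (mul_le_mul_of_nonneg_right hpmle (mul_nonneg (abs_nonneg _) (abs_nonneg _)))
    have p2' : G (j + 1) * (Pm j * (f 0 * f (j + 1)))
        ≤ G (j + 1) * (G j * (|f 0| * |f (j + 1)|)) :=
      mul_le_mul_of_nonneg_left p2 hg'.le
    have p3 : G (j + 1) * (G (j + 1) * f (j + 1) ^ 2)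
        ≤ (G 1 * G j) * (G (j + 1) * f (j + 1) ^ 2) :=
      mul_le_mul_of_nonneg_right hb1 (mul_nonneg hg'.le (sq_nonneg _))
    have key : (Pm j * f 0 + G (j + 1) * f (j + 1)) ^ 2
        ≤ G j * (f 0 ^ 2 * Pm j) + G j * (2 * |f 0| * |f (j + 1)| * G (j + 1))
          + G j * (G 1 * f (j + 1) ^ 2 * G (j + 1)) := by
      nlinarith [p1, p2', p3]
    have lhs_eq : (Pf f j) ^ 2 * πd j
        = (Pm j * f 0 + G (j + 1) * f (j + 1)) ^ 2 / (G j * (1 + ET)) := by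
      rw [hPf, hπd]
      field_simp
    have rhs_eq : f 0 ^ 2 * (Pm j / (1 + ET)) + 2 * |f 0| * (|f (j + 1)| * πd (j + 1))
          + G 1 * (f (j + 1) ^ 2 * πd (j + 1))
        = (G j * (f 0 ^ 2 * Pm j) + G j * (2 * |f 0| * |f (j + 1)| * G (j + 1))
          + G j * (G 1 * f (j + 1) ^ 2 * G (j + 1))) / (G j * (1 + ET)) := by
      rw [hπd]
      field_simp
    rw [lhs_eq, rhs_eq]
    gcongr
  -- summability of majorant and conclusion
  have hsM : Summable (fun j => f 0 ^ 2 * (Pm j / (1 + ET))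
      + 2 * |f 0| * (|f (j + 1)| * πd (j + 1)) + G 1 * (f (j + 1) ^ 2 * πd (j + 1))) := by
    exact (((hsumPm.div_const _).mul_left _).add (hsumfabs1.mul_left _)).add (hs21.mul_left _)
  have hsumLHS : Summable (fun j => (Pf f j) ^ 2 * πd j) :=
    Summable.of_nonneg_of_le (fun j => mul_nonneg (sq_nonneg _) (hπpos j).le) hpt hsM
  have step1 : (∑' j, (Pf f j) ^ 2 * πd j)
      ≤ f 0 ^ 2 * ((∑' j, Pm j) / (1 + ET)) + 2 * |f 0| * A + G 1 * B := by
    calc (∑' j, (Pf f j) ^ 2 * πd j)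
        ≤ ∑' j, (f 0 ^ 2 * (Pm j / (1 + ET)) + 2 * |f 0| * (|f (j + 1)| * πd (j + 1))
            + G 1 * (f (j + 1) ^ 2 * πd (j + 1))) := Summable.tsum_le_tsum hpt hsumLHS hsM
      _ = f 0 ^ 2 * ((∑' j, Pm j) / (1 + ET)) + 2 * |f 0| * A + G 1 * B := by
          rw [Summable.tsum_add (((hsumPm.div_const _).mul_left _).add (hsumfabs1.mul_left _))
            (hs21.mul_left _),
            Summable.tsum_add ((hsumPm.div_const _).mul_left _) (hsumfabs1.mul_left _),
            tsum_mul_left, tsum_mul_left, tsum_mul_left, tsum_div_const]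
  have hfirst : f 0 ^ 2 * ((∑' j, Pm j) / (1 + ET)) = |f 0| ^ 2 * πd 0 := by
    rw [htsumPm, hπ0, sq_abs]
  have e1 : |f 0| * A ≤ ET := by
    have h1 : (|f 0| * A) * πd 0 ≤ ET * πd 0 := by
      have h2 : (|f 0| * πd 0) * A ≤ A * A := mul_le_mul_of_nonneg_right hf0A hA0
      nlinarith [hA2, hSle]
    exact le_of_mul_le_mul_right h1 hπ00
  have e2 : |f 0| ^ 2 * πd 0 ≤ |f 0| * A := by
    have h := mul_le_mul_of_nonneg_left hf0A (abs_nonneg (f 0))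
    nlinarith [h]
  have e3 : G 1 * B ≤ G 1 := mul_le_of_le_one_right hG1pos.le hB1
  calc (∑' j, (Pf f j) ^ 2 * πd j)
      ≤ f 0 ^ 2 * ((∑' j, Pm j) / (1 + ET)) + 2 * |f 0| * A + G 1 * B := step1
    _ = |f 0| ^ 2 * πd 0 + 2 * (|f 0| * A) + G 1 * B := by rw [hfirst]; ring
    _ ≤ 3 * ET + G 1 := by linarith
end
end

section
/- Let γ ∈ (0,1) and let T be the ℕ-valued random variable with P(T ≥ j) = γ^{j(j+1)/2} for j ≥ 0 (so P(T ≥ 0) = 1). Consider the Markov chain on ℕ with transition probabilities p_{j,0} = P(T = j)/P(T ≥ j), p_{j,j+1} = P(T ≥ j+1)/P(T ≥ j), p_{j,k} = 0 otherwise, stationary distribution π(j) = P(T ≥ j)/(1 + E T), and transition operator Pf(j) = (P(T = j)/P(T ≥ j))·f(0) + (P(T ≥ j+1)/P(T ≥ j))·f(j+1). Then lim_{k→∞} sup{ Σ_{j=k}^∞ |Pf(j)|² π(j) : f ∈ L²(π), Σ_j f(j)² π(j) ≤ 1 } = 0; in particular P is uniformly integrable in L² (2-U.I.). -/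
open MeasureTheory Filter

noncomputable section

set_option maxHeartbeats 1000000 in
/-- **Example (2-U.I. for the chain with `P(T ≥ j) = γ^{j(j+1)/2}`).** For `γ ∈ (0,1)` let
`G j = P(T ≥ j) = γ^{j(j+1)/2}`, `E T = Σ_{j≥0} G(j+1)`, `π(j) = G j/(1+ET)` and
`Pf(j) = ((G j − G(j+1))/G j) f(0) + (G(j+1)/G j) f(j+1)`. Then
`lim_{k→∞} sup{ Σ_{j≥k} |Pf(j)|² π(j) : ‖f‖_{L²(π)} ≤ 1 } = 0`, i.e. the transition
operator is uniformly integrable in `L²` (2-U.I.). -/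
theorem stmt14
    (γ : ℝ) (hγ0 : 0 < γ) (hγ1 : γ < 1)
    (G : ℕ → ℝ) (hG : ∀ j, G j = γ ^ (j * (j + 1) / 2))
    (ET : ℝ) (hET : ET = ∑' j : ℕ, G (j + 1))
    (πd : ℕ → ℝ) (hπd : ∀ j, πd j = G j / (1 + ET))
    (Pf : (ℕ → ℝ) → ℕ → ℝ)
    (hPf : ∀ f j, Pf f j = ((G j - G (j + 1)) / G j) * f 0 + (G (j + 1) / G j) * f (j + 1)) :
    ∀ ε : ℝ, 0 < ε → ∃ K : ℕ, ∀ k : ℕ, K ≤ k → ∀ f : ℕ → ℝ,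
      Summable (fun j => f j ^ 2 * πd j) → (∑' j, f j ^ 2 * πd j) ≤ 1 →
      (∑' j : ℕ, if k ≤ j then (Pf f j) ^ 2 * πd j else 0) ≤ ε := by
  intro ε hε
  have h1γ : (0:ℝ) < 1 - γ := by linarith
  have hGpos : ∀ j, 0 < G j := fun j => by rw [hG]; positivity
  have hG1 : G 0 = 1 := by simp [hG]
  have hETnn : 0 ≤ ET := by
    rw [hET]; exact tsum_nonneg fun j => (hGpos _).le
  have h1ET : (0:ℝ) < 1 + ET := by linarith
  have hπpos : ∀ j, 0 < πd j := fun j => by rw [hπd]; exact div_pos (hGpos j) h1ET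
  have hGstep : ∀ j, G (j + 1) = G j * γ ^ (j + 1) := by
    intro j
    rw [hG, hG, ← pow_add]
    congr 1
    have h2 : 2 ∣ j * (j + 1) := (Nat.even_mul_succ_self j).two_dvd
    have h3 : (j + 1) * ((j + 1) + 1) = j * (j + 1) + 2 * (j + 1) := by ring
    omega
  have hπstep : ∀ j, πd (j + 1) = πd j * γ ^ (j + 1) := fun j => by
    rw [hπd, hπd, hGstep]; ring
  have hGle : ∀ j, G j ≤ γ ^ j := by
    intro j
    rw [hG]
    refine pow_le_pow_of_le_one hγ0.le hγ1.le ?_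
    rcases Nat.eq_zero_or_pos j with h | h
    · simp [h]
    · rw [Nat.le_div_iff_mul_le (by norm_num)]
      exact Nat.mul_le_mul_left j (by omega)
  have hgeo : Summable (fun j : ℕ => γ ^ j) := summable_geometric_of_lt_one hγ0.le hγ1
  have hsumG : Summable G := hgeo.of_nonneg_of_le (fun j => (hGpos j).le) hGle
  have hsumπ : Summable πd := (hsumG.div_const (1 + ET)).congr fun j => (hπd j).symm
  set C : ℝ := 2 / (1 - γ) + 2 with hCdef
  have hC : 0 < C := by positivity
  obtain ⟨K0, hK0⟩ := exists_pow_lt_of_lt_one (div_pos hε hC) hγ1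
  refine ⟨max K0 3, ?_⟩
  intro k hk f hf hf1
  have hk3 : 3 ≤ k := le_trans (le_max_right _ _) hk
  have hγk : γ ^ k ≤ γ ^ K0 :=
    pow_le_pow_of_le_one hγ0.le hγ1.le (le_trans (le_max_left _ _) hk)
  have hγknn : (0:ℝ) ≤ γ ^ k := by positivity
  -- bound on f 0
  have hf0 : (f 0) ^ 2 ≤ 1 + ET := by
    have h0 : (f 0) ^ 2 * πd 0 ≤ ∑' j, f j ^ 2 * πd j :=
      Summable.le_tsum hf 0 fun j _ => mul_nonneg (sq_nonneg _) (hπpos j).le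
    have hπ0 : πd 0 = 1 / (1 + ET) := by rw [hπd, hG1]
    rw [hπ0] at h0
    have := le_trans h0 hf1
    calc (f 0) ^ 2 = ((f 0) ^ 2 * (1 / (1 + ET))) * (1 + ET) := by
          field_simp
      _ ≤ 1 * (1 + ET) := by
          exact mul_le_mul_of_nonneg_right this h1ET.le
      _ = 1 + ET := one_mul _
  -- shifted sum
  have hfs : Summable (fun j => f (j + 1) ^ 2 * πd (j + 1)) :=
    (summable_nat_add_iff 1).mpr hf
  have hfs1 : (∑' j, f (j + 1) ^ 2 * πd (j + 1)) ≤ 1 := by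
    have h := Summable.sum_add_tsum_nat_add (f := fun j => f j ^ 2 * πd j) 1 hf
    have hnn : 0 ≤ ∑ i ∈ Finset.range 1, f i ^ 2 * πd i :=
      Finset.sum_nonneg fun i _ => mul_nonneg (sq_nonneg _) (hπpos i).le
    have : (∑' (i : ℕ), f (i + 1) ^ 2 * πd (i + 1)) ≤ ∑' j, f j ^ 2 * πd j := by
      linarith [h]
    linarith
  -- pointwise bound for j ≥ k
  have hpt : ∀ j, k ≤ j → (Pf f j) ^ 2 * πd j ≤
      2 * (f 0) ^ 2 * πd j + 2 * γ ^ k * (f (j + 1) ^ 2 * πd (j + 1)) := by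
    intro j hj
    rw [hPf]
    have hGj := hGpos j
    have ht : G (j + 1) / G j = γ ^ (j + 1) := by
      rw [hGstep]; field_simp
    have ha : (G j - G (j + 1)) / G j = 1 - γ ^ (j + 1) := by
      rw [hGstep]; field_simp
    rw [ht, ha, hπstep]
    set t : ℝ := γ ^ (j + 1) with htdef
    have ht0 : 0 ≤ t := by positivity
    have ht1 : t ≤ 1 := pow_le_one₀ hγ0.le hγ1.le
    have htk : t ≤ γ ^ k := pow_le_pow_of_le_one hγ0.le hγ1.le (by omega)
    have hπj := (hπpos j).le
    have key : ((1 - t) * f 0 + t * f (j + 1)) ^ 2 ≤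
        2 * (f 0) ^ 2 + 2 * t ^ 2 * f (j + 1) ^ 2 := by
      nlinarith [sq_nonneg ((1 - t) * f 0 - t * f (j + 1)), sq_nonneg (f 0),
        sq_nonneg (t * f (j+1)), mul_nonneg ht0 (sub_nonneg.mpr ht1),
        sq_nonneg ((1-t) * f 0), mul_nonneg (mul_nonneg ht0 (sub_nonneg.mpr ht1)) (sq_nonneg (f 0))]
    have hX : (0:ℝ) ≤ f (j + 1) ^ 2 * (πd j * t) := by positivity
    calc ((1 - t) * f 0 + t * f (j + 1)) ^ 2 * πd j
        ≤ (2 * (f 0) ^ 2 + 2 * t ^ 2 * f (j + 1) ^ 2) * πd j :=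
          mul_le_mul_of_nonneg_right key hπj
      _ = 2 * (f 0) ^ 2 * πd j + 2 * t * (f (j + 1) ^ 2 * (πd j * t)) := by ring
      _ ≤ 2 * (f 0) ^ 2 * πd j + 2 * γ ^ k * (f (j + 1) ^ 2 * (πd j * t)) := by
          have := mul_le_mul_of_nonneg_right htk hX
          nlinarith [this]
  -- majorant and summability
  set m : ℕ → ℝ := fun j =>
    if k ≤ j then 2 * (f 0) ^ 2 * πd j + 2 * γ ^ k * (f (j + 1) ^ 2 * πd (j + 1)) else 0
    with hmdef
  have hgsum : Summable (fun j => 2 * (f 0) ^ 2 * πd j +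
      2 * γ ^ k * (f (j + 1) ^ 2 * πd (j + 1))) :=
    (hsumπ.mul_left _).add (hfs.mul_left _)
  have hgnn : ∀ j, 0 ≤ 2 * (f 0) ^ 2 * πd j + 2 * γ ^ k * (f (j + 1) ^ 2 * πd (j + 1)) := by
    intro j
    have := (hπpos j).le
    have := (hπpos (j+1)).le
    positivity
  have hmsum : Summable m := by
    apply Summable.of_nonneg_of_le _ _ hgsum
    · intro j; rw [hmdef]; dsimp only; split_ifs with h
      · exact hgnn j
      · exact le_refl 0
    · intro j; rw [hmdef]; dsimp only; split_ifs with h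
      · exact le_refl _
      · exact hgnn j
  have hlnn : ∀ j, (0:ℝ) ≤ (if k ≤ j then (Pf f j) ^ 2 * πd j else 0) := by
    intro j; split_ifs
    · exact mul_nonneg (sq_nonneg _) (hπpos j).le
    · exact le_refl 0
  have hlle : ∀ j, (if k ≤ j then (Pf f j) ^ 2 * πd j else 0) ≤ m j := by
    intro j; rw [hmdef]; dsimp only; split_ifs with h
    · exact hpt j h
    · exact le_refl 0
  have hlsum : Summable (fun j => if k ≤ j then (Pf f j) ^ 2 * πd j else 0) :=
    Summable.of_nonneg_of_le hlnn hlle hmsum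
  have step1 : (∑' j : ℕ, if k ≤ j then (Pf f j) ^ 2 * πd j else 0) ≤ ∑' j, m j :=
    Summable.tsum_le_tsum hlle hlsum hmsum
  -- split majorant sum
  have hπind : Summable (fun j => if k ≤ j then πd j else 0) := by
    apply Summable.of_nonneg_of_le _ _ hsumπ
    · intro j; split_ifs; exacts [(hπpos j).le, le_refl 0]
    · intro j; split_ifs; exacts [le_refl _, (hπpos j).le]
  have hfind : Summable (fun j => if k ≤ j then f (j + 1) ^ 2 * πd (j + 1) else 0) := by
    apply Summable.of_nonneg_of_le _ _ hfs
    · intro j; split_ifs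
      exacts [mul_nonneg (sq_nonneg _) (hπpos _).le, le_refl 0]
    · intro j; split_ifs
      exacts [le_refl _, mul_nonneg (sq_nonneg _) (hπpos _).le]
  have hsplit : (∑' j, m j) = 2 * (f 0) ^ 2 * (∑' j, if k ≤ j then πd j else 0) +
      2 * γ ^ k * (∑' j, if k ≤ j then f (j + 1) ^ 2 * πd (j + 1) else 0) := by
    rw [← tsum_mul_left, ← tsum_mul_left, ← Summable.tsum_add ((hπind.mul_left _)) ((hfind.mul_left _))]
    apply tsum_congr
    intro j
    rw [hmdef]; dsimp only; split_ifs with h <;> ring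
  -- bound A
  have hA : (∑' j, if k ≤ j then πd j else 0) ≤ γ ^ k * (1 - γ)⁻¹ / (1 + ET) := by
    have hptA : ∀ j, (if k ≤ j then πd j else 0) ≤ γ ^ k / (1 + ET) * γ ^ j := by
      intro j
      split_ifs with h
      · rw [hπd]
        have hGkj : G j ≤ γ ^ (k + j) := by
          rw [hG]
          refine pow_le_pow_of_le_one hγ0.le hγ1.le ?_
          rw [Nat.le_div_iff_mul_le (by norm_num)]
          nlinarith [h, hk3]
        calc G j / (1 + ET) ≤ γ ^ (k + j) / (1 + ET) := by gcongr
          _ = γ ^ k / (1 + ET) * γ ^ j := by rw [pow_add]; ring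
      · positivity
    have hAsum : (∑' j, γ ^ k / (1 + ET) * γ ^ j) = γ ^ k / (1 + ET) * (1 - γ)⁻¹ := by
      rw [tsum_mul_left, tsum_geometric_of_lt_one hγ0.le hγ1]
    calc (∑' j, if k ≤ j then πd j else 0) ≤ ∑' j, γ ^ k / (1 + ET) * γ ^ j :=
          Summable.tsum_le_tsum hptA hπind (hgeo.mul_left _)
      _ = γ ^ k * (1 - γ)⁻¹ / (1 + ET) := by rw [hAsum]; ring
  -- bound B
  have hB : (∑' j, if k ≤ j then f (j + 1) ^ 2 * πd (j + 1) else 0) ≤ 1 := by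
    refine le_trans (Summable.tsum_le_tsum ?_ hfind hfs) hfs1
    intro j; split_ifs
    exacts [le_refl _, mul_nonneg (sq_nonneg _) (hπpos _).le]
  -- combine
  have hAnn : (0:ℝ) ≤ ∑' j, if k ≤ j then πd j else 0 :=
    tsum_nonneg fun j => by split_ifs; exacts [(hπpos j).le, le_refl 0]
  have hfinal : (∑' j, m j) ≤ γ ^ k * C := by
    rw [hsplit]
    have t1 : 2 * (f 0) ^ 2 * (∑' j, if k ≤ j then πd j else 0) ≤
        2 * (1 + ET) * (γ ^ k * (1 - γ)⁻¹ / (1 + ET)) := by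
      apply mul_le_mul (by nlinarith [hf0]) hA hAnn (by nlinarith [h1ET])
    have t2 : 2 * γ ^ k * (∑' j, if k ≤ j then f (j + 1) ^ 2 * πd (j + 1) else 0) ≤
        2 * γ ^ k * 1 := by
      apply mul_le_mul_of_nonneg_left hB (by positivity)
    have heq : 2 * (1 + ET) * (γ ^ k * (1 - γ)⁻¹ / (1 + ET)) = 2 * γ ^ k * (1 - γ)⁻¹ := by
      field_simp
    rw [hCdef]
    have : 2 / (1 - γ) = 2 * (1 - γ)⁻¹ := by ring
    nlinarith [t1, t2, heq]
  have hlast : γ ^ k * C ≤ γ ^ K0 * C := mul_le_mul_of_nonneg_right hγk hC.le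
  have hKC : γ ^ K0 * C < ε := by
    rw [← lt_div_iff₀ hC] at *
    exact hK0
  linarith [step1, hfinal, hlast, hKC]
end
end

section
/- Let γ ∈ (0,1) and let T be the ℕ-valued random variable with P(T ≥ j) = γ^{j(j+1)/2} for j ≥ 0. Consider the Markov transition operator on L²(π), where π(j) = P(T ≥ j)/(1 + E T), given by Pf(j) = (P(T = j)/P(T ≥ j))·f(0) + (P(T ≥ j+1)/P(T ≥ j))·f(j+1). For k ≥ 1 define f_k ∈ L²(π) by f_k(k) = √((1 + E T)/P(T ≥ k)) and f_k(j) = 0 for j ≠ k, so that ‖f_k‖_{L²(π)} = 1. Then for every q > 2, ‖P f_k‖_{L^q(π)}^q = (1 + E T)^{q/2 − 1}·γ^{(1/4)(k²(2−q) + k(3q−2))} → +∞ as k → ∞; consequently P is not a bounded linear operator from L²(π) to L^q(π) for any q > 2, i.e. P is not hyperbounded. -/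
open MeasureTheory Filter

noncomputable section

private lemma aux_calc (γ E a b q : ℝ) (hγ : 0 < γ) (hE : 0 < E) :
    ((γ ^ a / γ ^ b) * Real.sqrt (E / γ ^ a)) ^ q * (γ ^ b / E)
      = E ^ (q / 2 - 1) * γ ^ (a * q / 2 + b * (1 - q)) := by
  have hγa : 0 < γ ^ a := Real.rpow_pos_of_pos hγ a
  have hγb : 0 < γ ^ b := Real.rpow_pos_of_pos hγ b
  have hbase : 0 < (γ ^ a / γ ^ b) * Real.sqrt (E / γ ^ a) := by positivity
  have hL : 0 < ((γ ^ a / γ ^ b) * Real.sqrt (E / γ ^ a)) ^ q * (γ ^ b / E) := by positivity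
  have hR : 0 < E ^ (q / 2 - 1) * γ ^ (a * q / 2 + b * (1 - q)) := by positivity
  apply Real.log_injOn_pos (Set.mem_Ioi.2 hL) (Set.mem_Ioi.2 hR)
  rw [Real.log_mul (ne_of_gt (Real.rpow_pos_of_pos hbase q)) (by positivity),
      Real.log_rpow hbase, Real.log_mul (by positivity) (by positivity),
      Real.log_div hγa.ne' hγb.ne', Real.log_sqrt (by positivity),
      Real.log_div hE.ne' hγa.ne', Real.log_div hγb.ne' hE.ne',
      Real.log_rpow hγ, Real.log_rpow hγ,
      Real.log_mul (by positivity) (by positivity),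
      Real.log_rpow hE, Real.log_rpow hγ]
  ring

private lemma aux_cast (n : ℕ) : ((n * (n + 1) / 2 : ℕ) : ℝ) = (n : ℝ) * ((n : ℝ) + 1) / 2 := by
  obtain ⟨c, hc⟩ := Nat.even_mul_succ_self n
  have h2 : n * (n + 1) = 2 * c := by omega
  have h3 : (n : ℝ) * ((n : ℝ) + 1) = 2 * (c : ℝ) := by exact_mod_cast h2
  rw [h2, Nat.mul_div_cancel_left c two_pos]
  linarith

/-- **Example (failure of hyperboundedness for the chain with `P(T ≥ j) = γ^{j(j+1)/2}`).**
With `G j = γ^{j(j+1)/2}`, `E T = Σ_{j≥0} G(j+1)`, `π(j) = G j/(1+ET)`,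
`Pf(j) = ((G j − G(j+1))/G j) f(0) + (G(j+1)/G j) f(j+1)` and the unit vectors
`f_k = √((1+ET)/G k)·1_{{k}}`, one has, for every `q > 2`,
`‖P f_k‖_{L^q(π)}^q = (1+ET)^{q/2−1} γ^{(1/4)(k²(2−q)+k(3q−2))} → +∞` as `k → ∞`;
consequently `P` is not a bounded operator from `L²(π)` to `L^q(π)` for any `q > 2`,
i.e. `P` is not hyperbounded. -/
theorem stmt15
    (γ : ℝ) (hγ0 : 0 < γ) (hγ1 : γ < 1)
    (G : ℕ → ℝ) (hG : ∀ j, G j = γ ^ (j * (j + 1) / 2))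
    (ET : ℝ) (hET : ET = ∑' j : ℕ, G (j + 1))
    (πd : ℕ → ℝ) (hπd : ∀ j, πd j = G j / (1 + ET))
    (Pf : (ℕ → ℝ) → ℕ → ℝ)
    (hPf : ∀ f j, Pf f j = ((G j - G (j + 1)) / G j) * f 0 + (G (j + 1) / G j) * f (j + 1))
    (f : ℕ → ℕ → ℝ)
    (hf : ∀ k j, f k j = if j = k then Real.sqrt ((1 + ET) / G k) else 0) :
    (∀ k : ℕ, (∑' j, f k j ^ 2 * πd j) = 1)
    ∧ ∀ q : ℝ, 2 < q →
      ((∀ k : ℕ, 1 ≤ k →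
        (∑' j : ℕ, |Pf (f k) j| ^ q * πd j)
          = (1 + ET) ^ (q / 2 - 1)
              * γ ^ ((1 / 4) * ((k : ℝ) ^ 2 * (2 - q) + (k : ℝ) * (3 * q - 2))))
      ∧ Tendsto (fun k : ℕ => ∑' j : ℕ, |Pf (f k) j| ^ q * πd j) atTop atTop
      ∧ ¬ ∃ C : ℝ, ∀ g : ℕ → ℝ, Summable (fun j => g j ^ 2 * πd j) →
          (∑' j, g j ^ 2 * πd j) ≤ 1 → (∑' j, |Pf g j| ^ q * πd j) ≤ C) := by
  have hGpos : ∀ j, 0 < G j := fun j => by rw [hG]; positivity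
  have hETnn : 0 ≤ ET := hET ▸ tsum_nonneg (fun j => (hGpos _).le)
  have hE1 : (0:ℝ) < 1 + ET := by linarith
  have hGr : ∀ j : ℕ, G j = γ ^ ((j * (j + 1) / 2 : ℕ) : ℝ) := fun j => by
    rw [hG, Real.rpow_natCast]
  -- Part 1 : the f k are unit vectors
  have part1 : ∀ k : ℕ, (∑' j, f k j ^ 2 * πd j) = 1 := by
    intro k
    rw [tsum_eq_single k (fun j hj => by rw [hf, if_neg hj]; ring)]
    rw [hf, if_pos rfl, hπd, Real.sq_sqrt (div_nonneg hE1.le (hGpos k).le),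
      div_mul_div_comm, mul_comm (G k), div_self (mul_pos hE1 (hGpos k)).ne']
  refine ⟨part1, fun q hq => ?_⟩
  have hq0 : q ≠ 0 := by linarith
  -- the key formula
  have key : ∀ k : ℕ, 1 ≤ k → (∑' j : ℕ, |Pf (f k) j| ^ q * πd j)
      = (1 + ET) ^ (q / 2 - 1)
          * γ ^ ((1 / 4) * ((k : ℝ) ^ 2 * (2 - q) + (k : ℝ) * (3 * q - 2))) := by
    intro k hk
    obtain ⟨m, rfl⟩ : ∃ m, k = m + 1 := ⟨k - 1, (Nat.succ_pred_eq_of_pos hk).symm⟩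
    have hz : ∀ j : ℕ, j ≠ m → |Pf (f (m + 1)) j| ^ q * πd j = 0 := by
      intro j hj
      have h0 : f (m + 1) 0 = 0 := by rw [hf, if_neg (by omega)]
      have h1 : f (m + 1) (j + 1) = 0 := by rw [hf, if_neg (by omega)]
      rw [hPf, h0, h1, mul_zero, mul_zero, add_zero, abs_zero, Real.zero_rpow hq0, zero_mul]
    rw [tsum_eq_single m hz]
    have h0 : f (m + 1) 0 = 0 := by rw [hf, if_neg (by omega)]
    have h1 : f (m + 1) (m + 1) = Real.sqrt ((1 + ET) / G (m + 1)) := by rw [hf, if_pos rfl]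
    rw [hPf, h0, h1, mul_zero, zero_add, hπd]
    have habs : |G (m + 1) / G m * Real.sqrt ((1 + ET) / G (m + 1))|
        = G (m + 1) / G m * Real.sqrt ((1 + ET) / G (m + 1)) := by
      apply abs_of_nonneg
      have := hGpos m
      have := hGpos (m + 1)
      positivity
    rw [habs, hGr (m + 1), hGr m,
      aux_calc γ (1 + ET) (((m + 1) * ((m + 1) + 1) / 2 : ℕ) : ℝ)
        ((m * (m + 1) / 2 : ℕ) : ℝ) q hγ0 hE1]
    congr 1
    have hA := aux_cast (m + 1)
    have hB := aux_cast m
    rw [hA, hB]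
    push_cast
    ring
  have htend : Tendsto (fun k : ℕ => ∑' j : ℕ, |Pf (f k) j| ^ q * πd j) atTop atTop := by
    have hlog : Real.log γ < 0 := Real.log_neg hγ0 hγ1
    set Ek : ℕ → ℝ := fun k => (1 / 4) * ((k : ℝ) ^ 2 * (2 - q) + (k : ℝ) * (3 * q - 2)) with hEk
    have hEbot : Tendsto Ek atTop atBot := by
      apply tendsto_atBot_mono' atTop (f₁ := fun k : ℕ => -(k : ℝ))
      · have hN : ∀ᶠ k : ℕ in atTop, (3 * q + 2) / (q - 2) ≤ (k : ℝ) := by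
          filter_upwards [eventually_ge_atTop (⌈(3 * q + 2) / (q - 2)⌉₊)] with k hk
          calc (3 * q + 2) / (q - 2) ≤ (⌈(3 * q + 2) / (q - 2)⌉₊ : ℝ) := Nat.le_ceil _
            _ ≤ (k : ℝ) := by exact_mod_cast hk
        filter_upwards [hN] with k hk
        have hk2 : 3 * q + 2 ≤ (k : ℝ) * (q - 2) := by
          rw [div_le_iff₀ (by linarith)] at hk; linarith
        have hk0 : (0:ℝ) ≤ (k : ℝ) := Nat.cast_nonneg k
        simp only [hEk]
        nlinarith
      · exact tendsto_neg_atBot_iff.2 tendsto_natCast_atTop_atTop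
    have h2 : Tendsto (fun k : ℕ => Real.log γ * Ek k) atTop atTop :=
      hEbot.const_mul_atBot_of_neg hlog
    have h3 : Tendsto (fun k : ℕ => γ ^ (Ek k)) atTop atTop := by
      have := (Real.tendsto_exp_atTop).comp h2
      refine this.congr fun k => ?_
      simp [Real.rpow_def_of_pos hγ0, Function.comp]
    have h4 : Tendsto (fun k : ℕ =>
        (1 + ET) ^ (q / 2 - 1) * γ ^ (Ek k)) atTop atTop :=
      h3.const_mul_atTop (Real.rpow_pos_of_pos hE1 _)
    apply h4.congr'
    filter_upwards [eventually_ge_atTop 1] with k hk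
    exact (key k hk).symm
  refine ⟨key, htend, ?_⟩
  rintro ⟨C, hC⟩
  have hbd : ∀ k : ℕ, (∑' j : ℕ, |Pf (f k) j| ^ q * πd j) ≤ C := by
    intro k
    apply hC
    · apply summable_of_ne_finset_zero (s := {k})
      intro j hj
      simp only [Finset.mem_singleton] at hj
      rw [hf, if_neg hj]
      ring
    · exact (part1 k).le
  obtain ⟨k, hk⟩ := (htend.eventually_gt_atTop C).exists
  exact absurd (hbd k) (not_le.2 hk)
end
end

section
/- Let 0 < |ρ| < 1, let π be the standard Gaussian measure on ℝ with density (2π)^{-1/2} e^{-y²/2}, and define p(x,y) = (1 − ρ²)^{-1/2}·exp(−ρ²x²/(2(1−ρ²)) + ρxy/(1−ρ²) − ρ²y²/(2(1−ρ²))). Then for every q with 2 < q < (1 + |ρ|)/|ρ|, the double integral ∫∫ p(x,y)^q dπ(x) dπ(y) is finite. -/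
open MeasureTheory Filter

noncomputable section

lemma gauss_aux (a : ℝ) (ha : a < 1/2) :
    ∫⁻ y, ENNReal.ofReal (Real.exp (a * y ^ 2))
      ∂(volume.withDensity fun y =>
        ENNReal.ofReal ((Real.sqrt (2 * Real.pi))⁻¹ * Real.exp (-(y ^ 2) / 2))) < ⊤ := by
  rw [lintegral_withDensity_eq_lintegral_mul _ (by fun_prop) (by fun_prop)]
  have hInt : Integrable (fun y : ℝ =>
      (Real.sqrt (2 * Real.pi))⁻¹ * Real.exp (-(1/2 - a) * y ^ 2)) := by
    exact (integrable_exp_neg_mul_sq (by linarith)).const_mul _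
  have := hInt.lintegral_lt_top
  refine lt_of_le_of_lt (le_of_eq ?_) this
  refine lintegral_congr fun y => ?_
  simp only [Pi.mul_apply]
  rw [← ENNReal.ofReal_mul (by positivity)]
  congr 1
  rw [mul_assoc, ← Real.exp_add]
  ring_nf

/-- **Gaussian hyperboundedness of the AR(1) transition density.** Let `0 < |ρ| < 1`, let
`π` be the standard Gaussian measure on `ℝ`, and let
`p(x,y) = (1−ρ²)^{-1/2} exp(−ρ²x²/(2(1−ρ²)) + ρxy/(1−ρ²) − ρ²y²/(2(1−ρ²)))` be the density
of the AR(1) Gaussian transition kernel with respect to `π`. Then for every `q` with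
`2 < q < (1+|ρ|)/|ρ|`, the double integral `∫∫ p(x,y)^q dπ(x) dπ(y)` is finite. -/
theorem stmt16
    (ρ : ℝ) (hρ0 : 0 < |ρ|) (hρ1 : |ρ| < 1)
    (π : Measure ℝ)
    (hπ : π = volume.withDensity fun y =>
      ENNReal.ofReal ((Real.sqrt (2 * Real.pi))⁻¹ * Real.exp (-(y ^ 2) / 2)))
    (p : ℝ → ℝ → ℝ)
    (hp : ∀ x y, p x y = (Real.sqrt (1 - ρ ^ 2))⁻¹ *
      Real.exp (-(ρ ^ 2 * x ^ 2) / (2 * (1 - ρ ^ 2)) + ρ * x * y / (1 - ρ ^ 2)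
        - ρ ^ 2 * y ^ 2 / (2 * (1 - ρ ^ 2)))) :
    ∀ q : ℝ, 2 < q → q < (1 + |ρ|) / |ρ| →
      (∫⁻ x, ∫⁻ y, ENNReal.ofReal (p x y ^ q) ∂π ∂π) < ⊤ := by
  intro q hq2 hq
  have hs : 0 < 1 - ρ ^ 2 := by nlinarith [sq_abs ρ, abs_nonneg ρ]
  set a : ℝ := q * |ρ| / (2 * (1 + |ρ|)) with ha_def
  have hqρ : q * |ρ| < 1 + |ρ| := (lt_div_iff₀ hρ0).mp hq
  have ha : a < 1/2 := by
    rw [ha_def, div_lt_iff₀ (by positivity)]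
    linarith
  set K : ℝ := (Real.sqrt (1 - ρ ^ 2))⁻¹ ^ q with hK_def
  have hK0 : 0 ≤ K := Real.rpow_nonneg (by positivity) q
  -- pointwise bound
  have key : ∀ x y : ℝ, p x y ^ q ≤ K * (Real.exp (a * x ^ 2) * Real.exp (a * y ^ 2)) := by
    intro x y
    rw [hp]
    set A : ℝ := -(ρ ^ 2 * x ^ 2) / (2 * (1 - ρ ^ 2)) + ρ * x * y / (1 - ρ ^ 2)
        - ρ ^ 2 * y ^ 2 / (2 * (1 - ρ ^ 2)) with hA_def
    rw [Real.mul_rpow (by positivity) (le_of_lt (Real.exp_pos _)), ← Real.exp_mul]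
    have hq0 : (0:ℝ) ≤ q := by linarith
    have hxy : ρ * x * y ≤ |ρ| * (x ^ 2 + y ^ 2) / 2 := by
      have h1 : ρ * x * y ≤ |ρ| * (|x| * |y|) := by
        calc ρ * x * y ≤ |ρ * x * y| := le_abs_self _
          _ = |ρ| * (|x| * |y|) := by rw [abs_mul, abs_mul]; ring
      have h2 : |x| * |y| ≤ (x ^ 2 + y ^ 2) / 2 := by
        nlinarith [sq_nonneg (|x| - |y|), sq_abs x, sq_abs y]
      nlinarith [mul_le_mul_of_nonneg_left h2 (abs_nonneg ρ)]
    have hAle : A * q ≤ a * x ^ 2 + a * y ^ 2 := by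
      have hfac : (1 : ℝ) - ρ ^ 2 = (1 + |ρ|) * (1 - |ρ|) := by
        nlinarith [sq_abs ρ]
      have hnum : (-(ρ ^ 2 * x ^ 2) + 2 * (ρ * x * y) - ρ ^ 2 * y ^ 2) * q
          ≤ q * |ρ| * (1 - |ρ|) * (x ^ 2 + y ^ 2) := by
        have h3 := mul_le_mul_of_nonneg_left hxy hq0
        nlinarith [sq_abs ρ, sq_nonneg x, sq_nonneg y, mul_nonneg hq0 (sq_nonneg x), mul_nonneg hq0 (sq_nonneg y)]
      have h2s : (0 : ℝ) < 2 * (1 - ρ ^ 2) := by linarith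
      rw [hA_def]
      have ha' : a = q * |ρ| * (1 - |ρ|) / (2 * (1 - ρ ^ 2)) := by
        rw [ha_def, hfac]
        have h1 : (0:ℝ) < 1 + |ρ| := by positivity
        have h2 : (0:ℝ) < 1 - |ρ| := by linarith
        field_simp
      have lhs_eq : A * q = ((-(ρ ^ 2 * x ^ 2) + 2 * (ρ * x * y) - ρ ^ 2 * y ^ 2) * q)
          / (2 * (1 - ρ ^ 2)) := by
        rw [hA_def]; field_simp
      have rhs_eq : a * x ^ 2 + a * y ^ 2 = (q * |ρ| * (1 - |ρ|) * (x ^ 2 + y ^ 2))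
          / (2 * (1 - ρ ^ 2)) := by
        rw [ha']; field_simp
      rw [lhs_eq, rhs_eq]
      gcongr
    rw [← hK_def, ← Real.exp_add]
    exact mul_le_mul_of_nonneg_left (Real.exp_le_exp.mpr hAle) hK0
  -- integral bound
  have step1 : (∫⁻ x, ∫⁻ y, ENNReal.ofReal (p x y ^ q) ∂π ∂π)
      ≤ ∫⁻ x, ∫⁻ y, ENNReal.ofReal K * (ENNReal.ofReal (Real.exp (a * x ^ 2)) *
          ENNReal.ofReal (Real.exp (a * y ^ 2))) ∂π ∂π := by
    refine lintegral_mono fun x => lintegral_mono fun y => ?_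
    rw [← ENNReal.ofReal_mul (Real.exp_nonneg _) , ← ENNReal.ofReal_mul hK0]
    exact ENNReal.ofReal_le_ofReal (key x y)
  have hI : (∫⁻ y, ENNReal.ofReal (Real.exp (a * y ^ 2)) ∂π) < ⊤ := by
    rw [hπ]; exact gauss_aux a ha
  refine lt_of_le_of_lt step1 ?_
  have hmeas : Measurable fun y : ℝ => ENNReal.ofReal (Real.exp (a * y ^ 2)) := by
    fun_prop
  calc ∫⁻ x, ∫⁻ y, ENNReal.ofReal K * (ENNReal.ofReal (Real.exp (a * x ^ 2)) *
          ENNReal.ofReal (Real.exp (a * y ^ 2))) ∂π ∂π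
      = ∫⁻ x, ENNReal.ofReal K * ENNReal.ofReal (Real.exp (a * x ^ 2)) *
          ∫⁻ y, ENNReal.ofReal (Real.exp (a * y ^ 2)) ∂π ∂π := by
        refine lintegral_congr fun x => ?_
        rw [← lintegral_const_mul _ hmeas]
        refine lintegral_congr fun y => by ring
    _ = ENNReal.ofReal K * ((∫⁻ y, ENNReal.ofReal (Real.exp (a * y ^ 2)) ∂π)) *
          ∫⁻ x, ENNReal.ofReal (Real.exp (a * x ^ 2)) ∂π := by
        rw [← lintegral_const_mul _ hmeas]
        refine lintegral_congr fun x => by ring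
    _ < ⊤ := by
        exact ENNReal.mul_lt_top (ENNReal.mul_lt_top ENNReal.ofReal_lt_top hI) hI
end
end

section
/- Let S = [0,3) and define the Markov transition kernel P on S by: P(x, {x+1}) = 1 and P(x+1, {x+2}) = 1 for x ∈ [0,1), and P(x+2, B) = Leb(B)/2 for x ∈ [0,1) and Borel B ⊆ [0,1) ∪ [2,3). Let π be the probability measure on S with density p(x) = (1/4)·1_{[0,2)}(x) + (1/2)·1_{[2,3)}(x) with respect to Lebesgue measure. Then for every f ∈ L²(π) with ∫ f dπ = 0, one has ∫ (P³f)² dπ ≤ (27/32)·∫ f² dπ; i.e. the 3-step transition operator P³ has the L²-spectral gap property. -/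
open MeasureTheory Filter

noncomputable section

/-- The transition operator of the Markov chain on `S = [0,3)` given by
`P(x,{x+1}) = 1` for `x ∈ [0,1)`, `P(x+1,{x+2}) = 1` for `x ∈ [0,1)` and
`P(x+2,B) = Leb(B)/2` for `x ∈ [0,1)`, `B ⊆ [0,1) ∪ [2,3)`:
`(Pf)(x) = ∫ f(y) P(x,dy)`. -/
def PopSkel (f : ℝ → ℝ) (x : ℝ) : ℝ :=
  if x ∈ Set.Ico (0 : ℝ) 2 then f (x + 1)
  else if x ∈ Set.Ico (2 : ℝ) 3 then
    (1 / 2) * ∫ y in Set.Ico (0 : ℝ) 1 ∪ Set.Ico (2 : ℝ) 3, f y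
  else 0

/-- The stationary distribution of the chain: the measure on `[0,3)` with density
`(1/4)·1_{[0,2)} + (1/2)·1_{[2,3)}` with respect to Lebesgue measure. -/
def piSkel : Measure ℝ :=
  volume.withDensity fun x =>
    ENNReal.ofReal (if x ∈ Set.Ico (0 : ℝ) 2 then 1 / 4
      else if x ∈ Set.Ico (2 : ℝ) 3 then 1 / 2 else 0)

lemma shift_setIntegral (f : ℝ → ℝ) (a b t : ℝ) :
    ∫ y in Set.Ico a b, f (y + t) = ∫ y in Set.Ico (a + t) (b + t), f y := by
  have h₁ := measurePreserving_add_right (volume : Measure ℝ) t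
  have h₂ : MeasurableEmbedding (fun x : ℝ => x + t) :=
    (Homeomorph.addRight t).isClosedEmbedding.measurableEmbedding
  have h := h₁.setIntegral_preimage_emb h₂ f (Set.Ico (a + t) (b + t))
  rw [show ((fun x : ℝ => x + t) ⁻¹' Set.Ico (a + t) (b + t)) = Set.Ico a b by
    rw [Set.preimage_add_const_Ico]; ring_nf] at h
  exact h

lemma shift_integrableOn {f : ℝ → ℝ} {a b : ℝ} (t : ℝ)
    (hf : IntegrableOn f (Set.Ico (a + t) (b + t)) volume) :
    IntegrableOn (fun y => f (y + t)) (Set.Ico a b) volume := by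
  have h₁ := measurePreserving_add_right (volume : Measure ℝ) t
  have h₂ : MeasurableEmbedding (fun x : ℝ => x + t) :=
    (Homeomorph.addRight t).isClosedEmbedding.measurableEmbedding
  have h := ((h₁.restrict_preimage_emb h₂ (Set.Ico (a + t) (b + t))).integrable_comp_emb h₂
    (g := f)).2 hf
  rw [show ((fun x : ℝ => x + t) ⁻¹' Set.Ico (a + t) (b + t)) = Set.Ico a b by
    rw [Set.preimage_add_const_Ico]; ring_nf] at h
  exact h

lemma piSkel_eq : piSkel
    = ENNReal.ofReal (1 / 4) • volume.restrict (Set.Ico (0 : ℝ) 2)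
      + ENNReal.ofReal (1 / 2) • volume.restrict (Set.Ico (2 : ℝ) 3) := by
  rw [piSkel]
  have hfun : (fun x : ℝ => ENNReal.ofReal (if x ∈ Set.Ico (0 : ℝ) 2 then 1 / 4
      else if x ∈ Set.Ico (2 : ℝ) 3 then 1 / 2 else 0))
      = (Set.Ico (0 : ℝ) 2).indicator (fun _ => ENNReal.ofReal (1 / 4))
        + (Set.Ico (2 : ℝ) 3).indicator (fun _ => ENNReal.ofReal (1 / 2)) := by
    funext x
    by_cases h1 : x ∈ Set.Ico (0 : ℝ) 2
    · have h2 : x ∉ Set.Ico (2 : ℝ) 3 := fun h2 => absurd h1.2 (not_lt.2 h2.1)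
      simp [h1, h2]
    · by_cases h2 : x ∈ Set.Ico (2 : ℝ) 3 <;> simp [h1, h2]
  rw [hfun, withDensity_add_right _ (measurable_const.indicator measurableSet_Ico),
    withDensity_indicator measurableSet_Ico, withDensity_indicator measurableSet_Ico,
    withDensity_const, withDensity_const]

lemma piSkel_integral (g : ℝ → ℝ) (h1 : IntegrableOn g (Set.Ico (0 : ℝ) 2) volume)
    (h2 : IntegrableOn g (Set.Ico (2 : ℝ) 3) volume) :
    ∫ x, g x ∂piSkel
      = (1 / 4) * (∫ x in Set.Ico (0 : ℝ) 2, g x) + (1 / 2) * ∫ x in Set.Ico (2 : ℝ) 3, g x := by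
  rw [piSkel_eq, integral_add_measure (h1.smul_measure ENNReal.ofReal_ne_top)
      (h2.smul_measure ENNReal.ofReal_ne_top),
    integral_smul_measure, integral_smul_measure,
    ENNReal.toReal_ofReal (by norm_num : (0:ℝ) ≤ 1/4),
    ENNReal.toReal_ofReal (by norm_num : (0:ℝ) ≤ 1/2), smul_eq_mul, smul_eq_mul]

/-- **Example (spectral gap of the 3-skeleton).** For the chain on `[0,3)` above, the
third iterate of the transition operator satisfies
`∫ (P³f)² dπ ≤ (27/32) ∫ f² dπ` for every `f ∈ L²(π)` with `∫ f dπ = 0`; i.e. `P³` has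
the `L²`-spectral gap property. -/
theorem stmt17 :
    ∀ f : ℝ → ℝ, MemLp f 2 piSkel → (∫ x, f x ∂piSkel) = 0 →
      (∫ x, (PopSkel (PopSkel (PopSkel f)) x) ^ 2 ∂piSkel)
        ≤ (27 / 32) * ∫ x, (f x) ^ 2 ∂piSkel := by
  intro f hf hmean
  -- unfolding lemmas for PopSkel
  have pop_lo : ∀ (g : ℝ → ℝ) (x : ℝ), x ∈ Set.Ico (0:ℝ) 2 → PopSkel g x = g (x + 1) := by
    intro g x hx; simp only [PopSkel, if_pos hx]
  have pop_hi : ∀ (g : ℝ → ℝ) (x : ℝ), x ∈ Set.Ico (2:ℝ) 3 →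
      PopSkel g x = (1/2) * ∫ y in Set.Ico (0:ℝ) 1 ∪ Set.Ico (2:ℝ) 3, g y := by
    intro g x hx
    have hx' : x ∉ Set.Ico (0:ℝ) 2 := fun h => absurd h.2 (not_lt.2 hx.1)
    simp only [PopSkel, if_neg hx', if_pos hx]
  -- constants
  have hc4 : (4 : ENNReal) * ENNReal.ofReal (1 / 4) = 1 := by
    rw [show (1:ℝ)/4 = (4:ℝ)⁻¹ by norm_num,
      ENNReal.ofReal_inv_of_pos (by norm_num), ENNReal.ofReal_ofNat]
    exact ENNReal.mul_inv_cancel (by norm_num) (by norm_num)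
  have hc2 : (2 : ENNReal) * ENNReal.ofReal (1 / 2) = 1 := by
    rw [show (1:ℝ)/2 = (2:ℝ)⁻¹ by norm_num,
      ENNReal.ofReal_inv_of_pos (by norm_num), ENNReal.ofReal_ofNat]
    exact ENNReal.mul_inv_cancel (by norm_num) (by norm_num)
  -- Memℒp on the pieces
  have hle1 : ENNReal.ofReal (1/4) • volume.restrict (Set.Ico (0:ℝ) 2) ≤ piSkel := by
    rw [piSkel_eq]; exact Measure.le_add_right le_rfl
  have hle2 : ENNReal.ofReal (1/2) • volume.restrict (Set.Ico (2:ℝ) 3) ≤ piSkel := by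
    rw [piSkel_eq]; exact Measure.le_add_left le_rfl
  have hf02 : MemLp f 2 (volume.restrict (Set.Ico (0:ℝ) 2)) := by
    have h := (hf.mono_measure hle1).smul_measure (c := 4) (by norm_num)
    rwa [smul_smul, hc4, one_smul] at h
  have hf23 : MemLp f 2 (volume.restrict (Set.Ico (2:ℝ) 3)) := by
    have h := (hf.mono_measure hle2).smul_measure (c := 2) (by norm_num)
    rwa [smul_smul, hc2, one_smul] at h
  haveI i02 : IsFiniteMeasure (volume.restrict (Set.Ico (0:ℝ) 2)) :=
    ⟨by rw [Measure.restrict_apply_univ, Real.volume_Ico]; exact ENNReal.ofReal_lt_top⟩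
  haveI i23 : IsFiniteMeasure (volume.restrict (Set.Ico (2:ℝ) 3)) :=
    ⟨by rw [Measure.restrict_apply_univ, Real.volume_Ico]; exact ENNReal.ofReal_lt_top⟩
  haveI p01 : IsProbabilityMeasure (volume.restrict (Set.Ico (0:ℝ) 1)) :=
    ⟨by rw [Measure.restrict_apply_univ, Real.volume_Ico]; norm_num⟩
  haveI p12 : IsProbabilityMeasure (volume.restrict (Set.Ico (1:ℝ) 2)) :=
    ⟨by rw [Measure.restrict_apply_univ, Real.volume_Ico]; norm_num⟩
  haveI p23 : IsProbabilityMeasure (volume.restrict (Set.Ico (2:ℝ) 3)) :=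
    ⟨by rw [Measure.restrict_apply_univ, Real.volume_Ico]; norm_num⟩
  have hf01 : MemLp f 2 (volume.restrict (Set.Ico (0:ℝ) 1)) :=
    hf02.mono_measure (Measure.restrict_mono (Set.Ico_subset_Ico_right one_le_two) le_rfl)
  have hf12 : MemLp f 2 (volume.restrict (Set.Ico (1:ℝ) 2)) :=
    hf02.mono_measure (Measure.restrict_mono (Set.Ico_subset_Ico_left zero_le_one) le_rfl)
  -- integrability
  have hi02 : IntegrableOn f (Set.Ico (0:ℝ) 2) volume := hf02.integrable one_le_two
  have hi23 : IntegrableOn f (Set.Ico (2:ℝ) 3) volume := hf23.integrable one_le_two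
  have hisq02 : IntegrableOn (fun x => f x ^ 2) (Set.Ico (0:ℝ) 2) volume := hf02.integrable_sq
  have hisq23 : IntegrableOn (fun x => f x ^ 2) (Set.Ico (2:ℝ) 3) volume := hf23.integrable_sq
  have hi01 : IntegrableOn f (Set.Ico (0:ℝ) 1) volume :=
    hi02.mono_set (Set.Ico_subset_Ico_right one_le_two)
  have hi12 : IntegrableOn f (Set.Ico (1:ℝ) 2) volume :=
    hi02.mono_set (Set.Ico_subset_Ico_left zero_le_one)
  have hisq01 : IntegrableOn (fun x => f x ^ 2) (Set.Ico (0:ℝ) 1) volume :=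
    hisq02.mono_set (Set.Ico_subset_Ico_right one_le_two)
  have hisq12 : IntegrableOn (fun x => f x ^ 2) (Set.Ico (1:ℝ) 2) volume :=
    hisq02.mono_set (Set.Ico_subset_Ico_left zero_le_one)
  -- named integrals
  obtain ⟨I1, hI1⟩ : ∃ r : ℝ, (∫ x in Set.Ico (0:ℝ) 1, f x) = r := ⟨_, rfl⟩
  obtain ⟨I2, hI2⟩ : ∃ r : ℝ, (∫ x in Set.Ico (1:ℝ) 2, f x) = r := ⟨_, rfl⟩
  obtain ⟨I3, hI3⟩ : ∃ r : ℝ, (∫ x in Set.Ico (2:ℝ) 3, f x) = r := ⟨_, rfl⟩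
  obtain ⟨Q1, hQ1⟩ : ∃ r : ℝ, (∫ x in Set.Ico (0:ℝ) 1, f x ^ 2) = r := ⟨_, rfl⟩
  obtain ⟨Q2, hQ2⟩ : ∃ r : ℝ, (∫ x in Set.Ico (1:ℝ) 2, f x ^ 2) = r := ⟨_, rfl⟩
  obtain ⟨Q3, hQ3⟩ : ∃ r : ℝ, (∫ x in Set.Ico (2:ℝ) 3, f x ^ 2) = r := ⟨_, rfl⟩
  -- Cauchy–Schwarz on each unit interval, via nonnegativity of the variance
  have hvar : ∀ (a b : ℝ), IsProbabilityMeasure (volume.restrict (Set.Ico a b)) →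
      MemLp f 2 (volume.restrict (Set.Ico a b)) →
      (∫ x in Set.Ico a b, f x) ^ 2 ≤ ∫ x in Set.Ico a b, f x ^ 2 := by
    intro a b hp hm
    have h := ProbabilityTheory.variance_nonneg f (volume.restrict (Set.Ico a b))
    rw [ProbabilityTheory.variance_eq_sub hm] at h
    simp only [Pi.pow_apply] at h
    linarith
  have hv1 : I1 ^ 2 ≤ Q1 := by rw [← hI1, ← hQ1]; exact hvar 0 1 p01 hf01
  have hv2 : I2 ^ 2 ≤ Q2 := by rw [← hI2, ← hQ2]; exact hvar 1 2 p12 hf12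
  have hv3 : I3 ^ 2 ≤ Q3 := by rw [← hI3, ← hQ3]; exact hvar 2 3 p23 hf23
  -- disjointness / measure facts
  have hdisj13 : Disjoint (Set.Ico (0:ℝ) 1) (Set.Ico (2:ℝ) 3) := by
    rw [Set.disjoint_left]; rintro x ⟨_, h1⟩ ⟨h2, _⟩; linarith
  have hdisj12 : Disjoint (Set.Ico (0:ℝ) 1) (Set.Ico (1:ℝ) 2) := by
    rw [Set.disjoint_left]; rintro x ⟨_, h1⟩ ⟨h2, _⟩; linarith
  have hvol1 : ∀ a : ℝ, volume.real (Set.Ico a (a+1)) = 1 := by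
    intro a; rw [measureReal_def, Real.volume_Ico]; norm_num
  -- ∫ over U of f
  have hUf : (∫ y in Set.Ico (0:ℝ) 1 ∪ Set.Ico (2:ℝ) 3, f y) = I1 + I3 := by
    rw [setIntegral_union hdisj13 measurableSet_Ico hi01 hi23, hI1, hI3]
  -- shifted integrals of f
  have hshift1 : (∫ y in Set.Ico (0:ℝ) 1, f (y + 1)) = I2 := by
    rw [shift_setIntegral f 0 1 1, ← hI2]; norm_num
  have hshift2 : (∫ y in Set.Ico (0:ℝ) 1, f (y + 2)) = I3 := by
    rw [shift_setIntegral f 0 1 2, ← hI3]; norm_num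
  -- values of PopSkel f
  have hg1a : ∀ x ∈ Set.Ico (0:ℝ) 1, PopSkel f x = f (x + 1) := by
    intro x hx; exact pop_lo f x ⟨hx.1, lt_trans hx.2 one_lt_two⟩
  have hg1c : ∀ x ∈ Set.Ico (2:ℝ) 3, PopSkel f x = (1/2) * (I1 + I3) := by
    intro x hx; rw [pop_hi f x hx, hUf]
  -- integral of PopSkel f over U
  have hig1a : IntegrableOn (PopSkel f) (Set.Ico (0:ℝ) 1) volume := by
    refine (shift_integrableOn (f := f) (a := 0) (b := 1) 1 ?_).congr_fun
      (fun x hx => (hg1a x hx).symm) measurableSet_Ico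
    norm_num; exact hi12
  have hig1c : IntegrableOn (PopSkel f) (Set.Ico (2:ℝ) 3) volume := by
    refine (integrableOn_const ?_).congr_fun
      (fun x hx => (hg1c x hx).symm) measurableSet_Ico
    rw [Real.volume_Ico]; exact ENNReal.ofReal_ne_top
  have hUg1 : (∫ y in Set.Ico (0:ℝ) 1 ∪ Set.Ico (2:ℝ) 3, PopSkel f y)
      = I2 + (1/2) * (I1 + I3) := by
    rw [setIntegral_union hdisj13 measurableSet_Ico hig1a hig1c,
      setIntegral_congr_fun measurableSet_Ico hg1a,
      setIntegral_congr_fun measurableSet_Ico hg1c, hshift1, setIntegral_const,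
      show (3:ℝ) = 2 + 1 by norm_num, hvol1, one_smul]
  -- values of PopSkel² f
  have hg2a : ∀ x ∈ Set.Ico (0:ℝ) 1, PopSkel (PopSkel f) x = f (x + 2) := by
    intro x hx
    rw [pop_lo _ x ⟨hx.1, lt_trans hx.2 one_lt_two⟩,
      pop_lo f (x+1) ⟨by linarith [hx.1], by linarith [hx.2]⟩]
    ring_nf
  have hg2b : ∀ x ∈ Set.Ico (1:ℝ) 2, PopSkel (PopSkel f) x = (1/2) * (I1 + I3) := by
    intro x hx
    rw [pop_lo _ x ⟨le_trans zero_le_one hx.1, hx.2⟩,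
      pop_hi f (x+1) ⟨by linarith [hx.1], by linarith [hx.2]⟩, hUf]
  have hg2c : ∀ x ∈ Set.Ico (2:ℝ) 3, PopSkel (PopSkel f) x
      = (1/2) * (I2 + (1/2) * (I1 + I3)) := by
    intro x hx; rw [pop_hi _ x hx, hUg1]
  -- integral of PopSkel² f over U
  have hig2a : IntegrableOn (PopSkel (PopSkel f)) (Set.Ico (0:ℝ) 1) volume := by
    refine (shift_integrableOn (f := f) (a := 0) (b := 1) 2 ?_).congr_fun
      (fun x hx => (hg2a x hx).symm) measurableSet_Ico
    norm_num; exact hi23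
  have hig2c : IntegrableOn (PopSkel (PopSkel f)) (Set.Ico (2:ℝ) 3) volume := by
    refine (integrableOn_const ?_).congr_fun
      (fun x hx => (hg2c x hx).symm) measurableSet_Ico
    rw [Real.volume_Ico]; exact ENNReal.ofReal_ne_top
  have hUg2 : (∫ y in Set.Ico (0:ℝ) 1 ∪ Set.Ico (2:ℝ) 3, PopSkel (PopSkel f) y)
      = I3 + (1/2) * (I2 + (1/2) * (I1 + I3)) := by
    rw [setIntegral_union hdisj13 measurableSet_Ico hig2a hig2c,
      setIntegral_congr_fun measurableSet_Ico hg2a,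
      setIntegral_congr_fun measurableSet_Ico hg2c, hshift2, setIntegral_const,
      show (3:ℝ) = 2 + 1 by norm_num, hvol1, one_smul]
  -- values of PopSkel³ f
  have hg3a : ∀ x ∈ Set.Ico (0:ℝ) 1, PopSkel (PopSkel (PopSkel f)) x = (1/2) * (I1 + I3) := by
    intro x hx
    rw [pop_lo _ x ⟨hx.1, lt_trans hx.2 one_lt_two⟩]
    exact hg2b (x+1) ⟨by linarith [hx.1], by linarith [hx.2]⟩
  have hg3b : ∀ x ∈ Set.Ico (1:ℝ) 2, PopSkel (PopSkel (PopSkel f)) x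
      = (1/2) * (I2 + (1/2) * (I1 + I3)) := by
    intro x hx
    rw [pop_lo _ x ⟨le_trans zero_le_one hx.1, hx.2⟩]
    exact hg2c (x+1) ⟨by linarith [hx.1], by linarith [hx.2]⟩
  have hg3c : ∀ x ∈ Set.Ico (2:ℝ) 3, PopSkel (PopSkel (PopSkel f)) x
      = (1/2) * (I3 + (1/2) * (I2 + (1/2) * (I1 + I3))) := by
    intro x hx; rw [pop_hi _ x hx, hUg2]
  -- integrability of (PopSkel³ f)² on the pieces
  have hig3sq01 : IntegrableOn (fun x => (PopSkel (PopSkel (PopSkel f)) x) ^ 2)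
      (Set.Ico (0:ℝ) 1) volume := by
    refine (integrableOn_const (C := ((1:ℝ)/2 * (I1 + I3)) ^ 2) ?_).congr_fun
      (fun x hx => by rw [hg3a x hx]) measurableSet_Ico
    rw [Real.volume_Ico]; exact ENNReal.ofReal_ne_top
  have hig3sq12 : IntegrableOn (fun x => (PopSkel (PopSkel (PopSkel f)) x) ^ 2)
      (Set.Ico (1:ℝ) 2) volume := by
    refine (integrableOn_const (C := ((1:ℝ)/2 * (I2 + 1/2 * (I1 + I3))) ^ 2) ?_).congr_fun
      (fun x hx => by rw [hg3b x hx]) measurableSet_Ico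
    rw [Real.volume_Ico]; exact ENNReal.ofReal_ne_top
  have hig3sq23 : IntegrableOn (fun x => (PopSkel (PopSkel (PopSkel f)) x) ^ 2)
      (Set.Ico (2:ℝ) 3) volume := by
    refine (integrableOn_const (C := ((1:ℝ)/2 * (I3 + 1/2 * (I2 + 1/2 * (I1 + I3)))) ^ 2) ?_).congr_fun
      (fun x hx => by rw [hg3c x hx]) measurableSet_Ico
    rw [Real.volume_Ico]; exact ENNReal.ofReal_ne_top
  have hsplit : Set.Ico (0:ℝ) 2 = Set.Ico (0:ℝ) 1 ∪ Set.Ico (1:ℝ) 2 :=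
    (Set.Ico_union_Ico_eq_Ico zero_le_one one_le_two).symm
  -- compute the LHS
  have e1 : (∫ x in Set.Ico (0:ℝ) 1, (PopSkel (PopSkel (PopSkel f)) x) ^ 2)
      = ((1:ℝ)/2 * (I1 + I3)) ^ 2 := by
    rw [setIntegral_congr_fun (g := fun _ => ((1:ℝ)/2 * (I1 + I3)) ^ 2) measurableSet_Ico
      (fun x hx => by rw [hg3a x hx]), setIntegral_const,
      show (1:ℝ) = 0 + 1 by norm_num, hvol1, one_smul]
  have e2 : (∫ x in Set.Ico (1:ℝ) 2, (PopSkel (PopSkel (PopSkel f)) x) ^ 2)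
      = ((1:ℝ)/2 * (I2 + 1/2 * (I1 + I3))) ^ 2 := by
    rw [setIntegral_congr_fun (g := fun _ => ((1:ℝ)/2 * (I2 + 1/2 * (I1 + I3))) ^ 2)
      measurableSet_Ico (fun x hx => by rw [hg3b x hx]), setIntegral_const,
      show (2:ℝ) = 1 + 1 by norm_num, hvol1, one_smul]
  have e3 : (∫ x in Set.Ico (2:ℝ) 3, (PopSkel (PopSkel (PopSkel f)) x) ^ 2)
      = ((1:ℝ)/2 * (I3 + 1/2 * (I2 + 1/2 * (I1 + I3)))) ^ 2 := by
    rw [setIntegral_congr_fun (g := fun _ => ((1:ℝ)/2 * (I3 + 1/2 * (I2 + 1/2 * (I1 + I3)))) ^ 2)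
      measurableSet_Ico (fun x hx => by rw [hg3c x hx]), setIntegral_const,
      show (3:ℝ) = 2 + 1 by norm_num, hvol1, one_smul]
  have hLHS : (∫ x, (PopSkel (PopSkel (PopSkel f)) x) ^ 2 ∂piSkel)
      = (1/4) * (((1:ℝ)/2 * (I1 + I3)) ^ 2 + ((1:ℝ)/2 * (I2 + 1/2 * (I1 + I3))) ^ 2)
        + (1/2) * ((1:ℝ)/2 * (I3 + 1/2 * (I2 + 1/2 * (I1 + I3)))) ^ 2 := by
    rw [piSkel_integral _ (by rw [hsplit]; exact hig3sq01.union hig3sq12) hig3sq23, hsplit,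
      setIntegral_union hdisj12 measurableSet_Ico hig3sq01 hig3sq12, e1, e2, e3]
  -- compute the mean condition
  have hmean' : (1/4) * (I1 + I2) + (1/2) * I3 = 0 := by
    rw [piSkel_integral f hi02 hi23, hsplit,
      setIntegral_union hdisj12 measurableSet_Ico hi01 hi12, hI1, hI2, hI3] at hmean
    exact hmean
  -- compute the RHS
  have hRHS : (∫ x, (f x) ^ 2 ∂piSkel) = (1/4) * (Q1 + Q2) + (1/2) * Q3 := by
    rw [piSkel_integral _ hisq02 hisq23, hsplit,
      setIntegral_union hdisj12 measurableSet_Ico hisq01 hisq12, hQ1, hQ2, hQ3]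
  rw [hLHS, hRHS]
  nlinarith [hv1, hv2, hv3, hmean', sq_nonneg (I1 + I2), sq_nonneg I1, sq_nonneg I2]
end
end

section
/- Let S = [0,3) and define the Markov transition kernel P on S by: P(x, {x+1}) = 1 and P(x+1, {x+2}) = 1 for x ∈ [0,1), and P(x+2, B) = Leb(B)/2 for x ∈ [0,1) and Borel B ⊆ [0,1) ∪ [2,3). Let π be the probability measure on S with density p(x) = (1/4)·1_{[0,2)}(x) + (1/2)·1_{[2,3)}(x) with respect to Lebesgue measure. Then for every f ∈ L¹(π), ‖P³f‖_∞ ≤ 3·‖f‖_{L¹(π)}; i.e. the 3-step transition operator P³ is ultrabounded. -/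
open MeasureTheory Filter
open scoped ENNReal

noncomputable section

/-- **Example (ultraboundedness of the 3-skeleton).** For the chain on `[0,3)` above,
`‖P³f‖_∞ ≤ 3 ‖f‖_{L¹(π)}` for every `f ∈ L¹(π)`; i.e. the 3-step transition operator is
ultrabounded. -/
theorem stmt18 :
    ∀ f : ℝ → ℝ, Integrable f piSkel →
      eLpNorm (PopSkel (PopSkel (PopSkel f))) ⊤ piSkel
        ≤ ENNReal.ofReal (3 * ∫ x, |f x| ∂piSkel) := by
  intro f hf
  set w : ℝ → ℝ≥0∞ := fun x =>
    ENNReal.ofReal (if x ∈ Set.Ico (0 : ℝ) 2 then 1 / 4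
      else if x ∈ Set.Ico (2 : ℝ) 3 then 1 / 2 else 0) with hw_def
  have hw : Measurable w := by
    apply Measurable.ennreal_ofReal
    exact Measurable.ite measurableSet_Ico measurable_const
      (Measurable.ite measurableSet_Ico measurable_const measurable_const)
  have hpi : piSkel = volume.withDensity w := rfl
  set L : ℝ := ∫ x, |f x| ∂piSkel with hL
  have hL0 : 0 ≤ L := integral_nonneg fun x => abs_nonneg _
  -- measure comparison
  have hcomp : ∀ (s : Set ℝ) (c : ℝ≥0∞), MeasurableSet s → (∀ x ∈ s, 1 ≤ c * w x) →
      volume.restrict s ≤ c • piSkel := by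
    intro s c hs hb
    rw [Measure.le_iff]
    intro A hA
    have h1 : volume.restrict s A = volume (A ∩ s) := Measure.restrict_apply hA
    have h2 : (c • piSkel) A = c * ∫⁻ x in A, w x ∂volume := by
      rw [Measure.smul_apply, smul_eq_mul, hpi, withDensity_apply _ hA]
    rw [h1, h2, ← lintegral_const_mul _ hw]
    calc volume (A ∩ s) = ∫⁻ _ in A ∩ s, 1 ∂volume := by simp
      _ ≤ ∫⁻ x in A ∩ s, c * w x ∂volume :=
          setLIntegral_mono (hw.const_mul c) fun x hx => hb x hx.2
      _ ≤ ∫⁻ x in A, c * w x ∂volume := lintegral_mono_set Set.inter_subset_left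
  have h4 : ∀ s : Set ℝ, MeasurableSet s → s ⊆ Set.Ico (0 : ℝ) 3 →
      volume.restrict s ≤ (ENNReal.ofReal 4) • piSkel := by
    intro s hs hsub
    refine hcomp s _ hs fun x hx => ?_
    have hx3 := hsub hx
    simp only [hw_def]
    by_cases h1 : x ∈ Set.Ico (0 : ℝ) 2
    · rw [if_pos h1, ← ENNReal.ofReal_mul (by norm_num)]
      rw [ENNReal.one_le_ofReal]; norm_num
    · have h2 : x ∈ Set.Ico (2 : ℝ) 3 := by
        simp only [Set.mem_Ico] at hx3 h1 ⊢
        exact ⟨by by_contra hc; exact h1 ⟨hx3.1, by linarith⟩, hx3.2⟩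
      rw [if_neg h1, if_pos h2, ← ENNReal.ofReal_mul (by norm_num)]
      rw [ENNReal.one_le_ofReal]; norm_num
  have h2' : volume.restrict (Set.Ico (2 : ℝ) 3) ≤ (ENNReal.ofReal 2) • piSkel := by
    refine hcomp _ _ measurableSet_Ico fun x hx => ?_
    have h1 : x ∉ Set.Ico (0 : ℝ) 2 := by
      simp only [Set.mem_Ico] at hx ⊢; intro hc; linarith [hx.1, hc.2]
    simp only [hw_def]
    rw [if_neg h1, if_pos hx, ← ENNReal.ofReal_mul (by norm_num)]
    rw [ENNReal.one_le_ofReal]; norm_num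
  -- integral bounds
  have hbound : ∀ (s : Set ℝ) (r : ℝ), 0 ≤ r →
      volume.restrict s ≤ (ENNReal.ofReal r) • piSkel →
      (∫ y in s, |f y| ∂volume) ≤ r * L ∧ IntegrableOn f s volume := by
    intro s r hr hle
    have hfi : Integrable f ((ENNReal.ofReal r) • piSkel) :=
      hf.smul_measure ENNReal.ofReal_ne_top
    refine ⟨?_, hfi.mono_measure hle⟩
    calc ∫ y in s, |f y| ∂volume
        ≤ ∫ y, |f y| ∂((ENNReal.ofReal r) • piSkel) :=
          integral_mono_measure hle (ae_of_all _ fun x => abs_nonneg _) hfi.abs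
      _ = r * L := by
          rw [integral_smul_measure, ENNReal.toReal_ofReal hr, smul_eq_mul, hL]
  -- sets
  set A : Set ℝ := Set.Ico (0 : ℝ) 1 ∪ Set.Ico 2 3 with hA_def
  have hA_meas : MeasurableSet A := measurableSet_Ico.union measurableSet_Ico
  have hA_sub : A ⊆ Set.Ico (0 : ℝ) 3 := by
    rintro x (hx | hx) <;> simp only [Set.mem_Ico] at hx ⊢ <;> constructor <;> linarith [hx.1, hx.2]
  have h12_sub : Set.Ico (1 : ℝ) 2 ⊆ Set.Ico (0 : ℝ) 3 := by
    intro x hx; simp only [Set.mem_Ico] at hx ⊢; constructor <;> linarith [hx.1, hx.2]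
  obtain ⟨hIA, hfA⟩ := hbound A 4 (by norm_num) (h4 A hA_meas hA_sub)
  obtain ⟨hI12, hf12⟩ := hbound (Set.Ico 1 2) 4 (by norm_num) (h4 _ measurableSet_Ico h12_sub)
  obtain ⟨hI23, hf23⟩ := hbound (Set.Ico 2 3) 2 (by norm_num) h2'
  -- translation
  have hmp : MeasurePreserving (fun x : ℝ => x + 1) volume volume :=
    measurePreserving_add_right volume 1
  have hemb : MeasurableEmbedding (fun x : ℝ => x + 1) :=
    (MeasurableEquiv.addRight (1 : ℝ)).measurableEmbedding
  have hpre : ∀ a b : ℝ, (fun x : ℝ => x + 1) ⁻¹' Set.Ico (a + 1) (b + 1) = Set.Ico a b := by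
    intro a b; ext x
    simp only [Set.mem_preimage, Set.mem_Ico]
    constructor <;> rintro ⟨h1, h2⟩ <;> constructor <;> linarith
  have htrans : ∀ (g : ℝ → ℝ) (a b : ℝ),
      ∫ y in Set.Ico a b, g (y + 1) ∂volume = ∫ y in Set.Ico (a + 1) (b + 1), g y ∂volume := by
    intro g a b
    rw [← hpre a b]
    exact hmp.setIntegral_preimage_emb hemb g _
  have htransInt : ∀ (g : ℝ → ℝ) (a b : ℝ), IntegrableOn g (Set.Ico (a + 1) (b + 1)) volume →
      IntegrableOn (fun y => g (y + 1)) (Set.Ico a b) volume := by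
    intro g a b hg
    have := (hmp.restrict_preimage_emb hemb (Set.Ico (a + 1) (b + 1))).integrable_comp_emb hemb (g := g)
    rw [hpre a b] at this
    exact this.mpr hg
  -- abbreviations
  set g : ℝ → ℝ := PopSkel f with hg_def
  set h : ℝ → ℝ := PopSkel g with hh_def
  set cf : ℝ := (1 / 2) * ∫ y in A, f y with hcf_def
  -- pointwise values of g
  have hg01 : ∀ y ∈ Set.Ico (0 : ℝ) 2, g y = f (y + 1) := by
    intro y hy; simp only [hg_def, PopSkel, if_pos hy]
  have hg23 : ∀ y ∈ Set.Ico (2 : ℝ) 3, g y = cf := by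
    intro y hy
    have h1 : y ∉ Set.Ico (0 : ℝ) 2 := by
      simp only [Set.mem_Ico] at hy ⊢; intro hc; linarith [hy.1, hc.2]
    simp only [hg_def, PopSkel, if_neg h1, if_pos hy, hcf_def, hA_def]
  have hcf_bd : |cf| ≤ 2 * L := by
    rw [hcf_def, abs_mul, abs_of_nonneg (by norm_num : (0:ℝ) ≤ 1/2)]
    have h1 : |∫ y in A, f y| ≤ ∫ y in A, |f y| := by
      simpa [Real.norm_eq_abs] using
        norm_integral_le_integral_norm (μ := volume.restrict A) f
    nlinarith [hIA]
  -- integral of g over A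
  have hg_int01 : IntegrableOn g (Set.Ico (0 : ℝ) 1) volume := by
    refine (IntegrableOn.congr_fun (f := fun y => f (y + 1)) ?_ ?_ measurableSet_Ico)
    · exact htransInt f 0 1 (by norm_num; exact hf12)
    · intro y hy
      exact (hg01 y ⟨hy.1, by linarith [hy.2]⟩).symm
  have hg_int23 : IntegrableOn g (Set.Ico (2 : ℝ) 3) volume := by
    refine (IntegrableOn.congr_fun (f := fun _ => cf) ((integrableOn_const_iff).mpr ?_) ?_ measurableSet_Ico)
    · right; simp [Real.volume_Ico]
    · intro y hy; exact (hg23 y hy).symm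
  have hdisj : Disjoint (Set.Ico (0 : ℝ) 1) (Set.Ico (2 : ℝ) 3) := by
    apply Set.disjoint_left.mpr
    intro x hx hx'
    simp only [Set.mem_Ico] at hx hx'; linarith [hx.2, hx'.1]
  have hIg : ∫ y in A, g y ∂volume = (∫ y in Set.Ico (1:ℝ) 2, f y ∂volume) + cf := by
    rw [hA_def, setIntegral_union hdisj measurableSet_Ico hg_int01 hg_int23]
    congr 1
    · rw [setIntegral_congr_fun measurableSet_Ico
        (fun y hy => hg01 y ⟨hy.1, by linarith [hy.2]⟩)]
      have := htrans f 0 1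
      norm_num at this
      exact this
    · rw [setIntegral_congr_fun measurableSet_Ico fun y hy => hg23 y hy]
      simp [Real.volume_Ico]
      norm_num
  set cg : ℝ := (1 / 2) * ∫ y in A, g y with hcg_def
  have hcg_bd : |cg| ≤ 3 * L := by
    rw [hcg_def, hIg, abs_mul, abs_of_nonneg (by norm_num : (0:ℝ) ≤ 1/2)]
    have h1 : |∫ y in Set.Ico (1:ℝ) 2, f y| ≤ ∫ y in Set.Ico (1:ℝ) 2, |f y| := by
      simpa [Real.norm_eq_abs] using
        norm_integral_le_integral_norm (μ := volume.restrict (Set.Ico (1:ℝ) 2)) f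
    have h2 := abs_add_le (∫ y in Set.Ico (1:ℝ) 2, f y ∂volume) cf
    nlinarith [hI12, hcf_bd]
  -- pointwise values of h
  have hh01 : ∀ y ∈ Set.Ico (0 : ℝ) 1, h y = f (y + 1 + 1) := by
    intro y hy
    simp only [Set.mem_Ico] at hy
    have h1 : y ∈ Set.Ico (0 : ℝ) 2 := ⟨hy.1, by linarith⟩
    have h2 : y + 1 ∈ Set.Ico (0 : ℝ) 2 := ⟨by linarith, by linarith⟩
    rw [hh_def]
    simp only [PopSkel, if_pos h1]
    exact hg01 (y + 1) h2
  have hh23 : ∀ y ∈ Set.Ico (2 : ℝ) 3, h y = cg := by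
    intro y hy
    have h1 : y ∉ Set.Ico (0 : ℝ) 2 := by
      simp only [Set.mem_Ico] at hy ⊢; intro hc; linarith [hy.1, hc.2]
    rw [hh_def]
    simp only [PopSkel, if_neg h1, if_pos hy, hcg_def, hA_def]
  have hh_int01 : IntegrableOn h (Set.Ico (0 : ℝ) 1) volume := by
    refine (IntegrableOn.congr_fun (f := fun y => f (y + 1 + 1)) ?_ ?_ measurableSet_Ico)
    · exact htransInt (fun z => f (z + 1)) 0 1
        (by norm_num; exact htransInt f 1 2 (by norm_num; exact hf23))
    · intro y hy; exact (hh01 y hy).symm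
  have hh_int23 : IntegrableOn h (Set.Ico (2 : ℝ) 3) volume := by
    refine (IntegrableOn.congr_fun (f := fun _ => cg) ((integrableOn_const_iff).mpr ?_) ?_ measurableSet_Ico)
    · right; simp [Real.volume_Ico]
    · intro y hy; exact (hh23 y hy).symm
  have hIh : ∫ y in A, h y ∂volume = (∫ y in Set.Ico (2:ℝ) 3, f y ∂volume) + cg := by
    rw [hA_def, setIntegral_union hdisj measurableSet_Ico hh_int01 hh_int23]
    congr 1
    · rw [setIntegral_congr_fun measurableSet_Ico fun y hy => hh01 y hy]
      have t1 := htrans (fun z => f (z + 1)) 0 1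
      have t2 := htrans f 1 2
      norm_num at t1 t2
      rw [t1, t2]
    · rw [setIntegral_congr_fun measurableSet_Ico fun y hy => hh23 y hy]
      simp [Real.volume_Ico]
      norm_num
  -- pointwise bound on k = PopSkel h
  have hk_bd : ∀ x : ℝ, |PopSkel h x| ≤ 3 * L := by
    intro x
    by_cases h1 : x ∈ Set.Ico (0 : ℝ) 2
    · simp only [PopSkel, if_pos h1]
      simp only [Set.mem_Ico] at h1
      by_cases h2 : x < 1
      · have hx2 : x + 1 ∈ Set.Ico (0:ℝ) 2 := ⟨by linarith [h1.1], by linarith⟩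
        have hx3 : x + 1 + 1 ∈ Set.Ico (2:ℝ) 3 := ⟨by linarith [h1.1], by linarith⟩
        have hval : h (x + 1) = cf := by
          rw [hh_def]
          simp only [PopSkel, if_pos hx2]
          exact hg23 _ hx3
        rw [hval]
        linarith [hcf_bd]
      · have hx2 : x + 1 ∈ Set.Ico (2:ℝ) 3 := ⟨by linarith, by linarith [h1.2]⟩
        rw [hh23 _ hx2]
        exact hcg_bd
    · by_cases h2 : x ∈ Set.Ico (2 : ℝ) 3
      · have : PopSkel h x = (1/2) * ∫ y in A, h y ∂volume := by
          simp only [PopSkel, if_neg h1, if_pos h2, hA_def]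
        rw [this, hIh, abs_mul, abs_of_nonneg (by norm_num : (0:ℝ) ≤ 1/2)]
        have h3 : |∫ y in Set.Ico (2:ℝ) 3, f y| ≤ ∫ y in Set.Ico (2:ℝ) 3, |f y| := by
          simpa [Real.norm_eq_abs] using
            norm_integral_le_integral_norm (μ := volume.restrict (Set.Ico (2:ℝ) 3)) f
        have h4 := abs_add_le (∫ y in Set.Ico (2:ℝ) 3, f y ∂volume) cg
        nlinarith [hI23, hcg_bd]
      · simp only [PopSkel, if_neg h1, if_neg h2, abs_zero]
        positivity
  -- conclude
  have : eLpNorm (PopSkel h) ⊤ piSkel ≤ ENNReal.ofReal (3 * L) := by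
    rw [eLpNorm_exponent_top]
    exact eLpNormEssSup_le_of_ae_bound (ae_of_all _ fun x => by
      rw [Real.norm_eq_abs]; exact hk_bd x)
  simpa [hg_def, hh_def, hL] using this
end
end
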